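/- arXiv:1801.01992 — 10 statements merged into one kernel-verified Lean document; each statement's English description precedes it below -/
import Mathlib

section
/- Let (E,τ) be a real locally convex space. If every subset of E that is countably compact in the weak topology σ(E,E') is countably compact in the original topology τ, then E has the Schur property. -/
open Filter Topology Bornology

/-- The weak topology σ(E,E') on a (locally convex) topological vector space `E`:
the initial topology with respect to all continuous linear functionals on `E`. -/
def weakTop (E : Type*) [AddCommGroup E] [Module ℝ E] [TopologicalSpace E] :
    TopologicalSpace E :=
  TopologicalSpace.induced (fun x (f : E →L[ℝ] ℝ) => f x) Pi.topologicalSpace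

/-- A set `A` is functionally bounded for the topology `t` if every `t`-continuous
real-valued function is bounded on `A`. -/
def FunBounded {E : Type*} (t : TopologicalSpace E) (A : Set E) : Prop :=
  ∀ f : E → ℝ, @Continuous E ℝ t _ f → ∃ C : ℝ, ∀ x ∈ A, |f x| ≤ C

/-- The Schur property: every sequence converging in the weak topology σ(E,E') to a point
converges to that point in the original topology. -/
def HasSchur (E : Type*) [AddCommGroup E] [Module ℝ E] [TopologicalSpace E] : Prop :=
  ∀ (u : ℕ → E) (a : E),
    Filter.Tendsto u Filter.atTop (@nhds E (weakTop E) a) →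
    Filter.Tendsto u Filter.atTop (nhds a)

/-- A set `A` is countably compact for the topology `t` if every sequence in `A` has a
cluster point belonging to `A`. -/
def CountablyCompactIn {E : Type*} (t : TopologicalSpace E) (A : Set E) : Prop :=
  ∀ u : ℕ → E, (∀ n, u n ∈ A) → ∃ a ∈ A, @MapClusterPt E t ℕ a Filter.atTop u

section Aux

open Filter

/-- Aux: a value taken frequently is a map cluster point. -/
lemma auxFreqCluster {X : Type*} [TopologicalSpace X] {x : X} {u : ℕ → X}
    (h : ∃ᶠ n in atTop, u n = x) : MapClusterPt x atTop u := by
  rw [mapClusterPt_iff_frequently]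
  intro s hs
  exact h.mono fun n hn => hn ▸ mem_of_mem_nhds hs

/-- Aux: cluster points transfer to a coarser topology. -/
lemma auxClusterMono {X : Type*} {t₁ t₂ : TopologicalSpace X} (hle : t₁ ≤ t₂)
    {x : X} {u : ℕ → X} (h : @MapClusterPt X t₁ ℕ x atTop u) :
    @MapClusterPt X t₂ ℕ x atTop u := by
  have h' : Filter.NeBot (@nhds X t₁ x ⊓ Filter.map u atTop) := h
  exact h'.mono (inf_le_inf_right _ (nhds_mono hle))

/-- Aux: a cluster point of a sequence converging to `a` maps to the same value
under any continuous map to a Hausdorff space. -/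
lemma auxClusterEq {X Y : Type*} [TopologicalSpace X] [TopologicalSpace Y] [T2Space Y]
    {v : ℕ → X} {a b : X} {f : X → Y} (hf : Continuous f)
    (hv : Tendsto v atTop (nhds a)) (hb : MapClusterPt b atTop v) : f b = f a := by
  have h1 : Tendsto (f ∘ v) atTop (nhds (f a)) := (hf.tendsto a).comp hv
  have h2 : ClusterPt (f b) (Filter.map (f ∘ v) atTop) :=
    hb.clusterPt.map hf.continuousAt (Filter.tendsto_map'_iff.mp Filter.tendsto_map)
  have h2' : Filter.NeBot (nhds (f b) ⊓ Filter.map (f ∘ v) atTop) := h2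
  exact eq_of_nhds_neBot (h2'.mono (inf_le_inf_left _ h1))

/-- Aux: the range of a convergent sequence together with its limit is
countably compact. -/
lemma auxCountablyCompact {X : Type*} [t : TopologicalSpace X] {v : ℕ → X} {a : X}
    (hv : Tendsto v atTop (nhds a)) :
    CountablyCompactIn t (Set.range v ∪ {a}) := by
  intro w hw
  by_cases hx : ∃ x, {n | w n = x}.Infinite
  · obtain ⟨x, hxi⟩ := hx
    obtain ⟨m, hm⟩ := hxi.nonempty
    exact ⟨x, hm ▸ hw m, auxFreqCluster (Nat.frequently_atTop_iff_infinite.mpr hxi)⟩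
  · push_neg at hx
    refine ⟨a, Or.inr rfl, ?_⟩
    have hwa : Tendsto w atTop (nhds a) := by
      rw [Filter.tendsto_def]
      intro s hs
      have hKv : ∀ᶠ k in atTop, v k ∈ s := Filter.mem_map.mp (hv hs)
      obtain ⟨K, hK⟩ := Filter.eventually_atTop.mp hKv
      have hmem : (w ⁻¹' s) ∈ (Filter.cofinite : Filter ℕ) := by
        rw [Filter.mem_cofinite]
        have hsub : (w ⁻¹' s)ᶜ ⊆ ⋃ k ∈ Finset.range K, {n | w n = v k} := by
          intro n hn
          rcases hw n with hr | hr
          · obtain ⟨k, hk⟩ := hr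
            by_cases hkK : K ≤ k
            · refine absurd ?_ hn
              show w n ∈ s
              rw [← hk]; exact hK k hkK
            · simp only [Set.mem_iUnion]
              exact ⟨k, Finset.mem_range.mpr (not_le.mp hkK), hk.symm⟩
          · rw [Set.mem_singleton_iff] at hr
            refine absurd ?_ hn
            show w n ∈ s
            rw [hr]; exact mem_of_mem_nhds hs
        exact Set.Finite.subset (Set.Finite.biUnion (Finset.range K).finite_toSet
          fun k _ => hx (v k)) hsub
      rwa [Nat.cofinite_eq_atTop] at hmem
    exact hwa.mapClusterPt

end Aux

/-- If a real locally convex space weakly respects countable compactness,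
then it has the Schur property. -/
theorem schur_of_weakly_respects_countable_compactness
    (E : Type*) [AddCommGroup E] [Module ℝ E] [τ : TopologicalSpace E]
    [IsTopologicalAddGroup E] [ContinuousSMul ℝ E] [LocallyConvexSpace ℝ E]
    (h : ∀ A : Set E, CountablyCompactIn (weakTop E) A → CountablyCompactIn τ A) :
    HasSchur E := by
  have hτle : τ ≤ weakTop E :=
    continuous_iff_le_induced.mp (continuous_pi fun f : E →L[ℝ] ℝ => f.continuous)
  have hfw : ∀ f : E →L[ℝ] ℝ, @Continuous E ℝ (weakTop E) _ f := fun f =>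
    @Continuous.comp E ((E →L[ℝ] ℝ) → ℝ) ℝ (weakTop E) _ _
      (fun x (g : E →L[ℝ] ℝ) => g x) (fun p => p f)
      (continuous_apply f) continuous_induced_dom
  intro u a hu
  by_contra hnot
  rw [Filter.tendsto_def] at hnot
  push_neg at hnot
  obtain ⟨U, hU, hUnot⟩ := hnot
  have hfreq : ∃ᶠ n in atTop, u n ∉ U := Filter.not_eventually.mp hUnot
  obtain ⟨φ, hφ, hφU⟩ := extraction_of_frequently_atTop hfreq
  set v : ℕ → E := u ∘ φ with hv_def
  have hv : Tendsto v atTop (@nhds E (weakTop E) a) := hu.comp hφ.tendsto_atTop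
  have hAw : CountablyCompactIn (weakTop E) (Set.range v ∪ {a}) :=
    @auxCountablyCompact E (weakTop E) v a hv
  obtain ⟨b, hbA, hbc⟩ := h _ hAw v (fun n => Or.inl ⟨n, rfl⟩)
  rcases hbA with hb | hb
  · obtain ⟨m, hm⟩ := hb
    have hbw : @MapClusterPt E (weakTop E) ℕ b atTop v := auxClusterMono hτle hbc
    have hfb : ∀ f : E →L[ℝ] ℝ, f b = f a := fun f =>
      @auxClusterEq E ℝ (weakTop E) _ _ v a b f (hfw f) hv hbw
    have hba : a - b ∈ closure ({0} : Set E) := by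
      by_contra hba
      obtain ⟨f, c, hfc, hc⟩ := geometric_hahn_banach_point_closed
        ((convex_singleton (0:E)).closure) isClosed_closure hba
      have h0 : c < f 0 := hc 0 (subset_closure rfl)
      rw [map_zero] at h0
      rw [map_sub, ← hfb f, sub_self] at hfc
      exact absurd (hfc.trans h0) (lt_irrefl 0)
    have hspec : b ⤳ a := by
      have h0 : (0:E) ⤳ (a - b) := specializes_iff_mem_closure.mpr hba
      have h1 := h0.map (continuous_add_right b)
      simpa using h1
    have hbU : b ∈ U := mem_of_mem_nhds (specializes_iff_nhds.mp hspec hU)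
    have hvm : v m ∈ U := hm ▸ hbU
    exact hφU m hvm
  · rw [Set.mem_singleton_iff] at hb
    subst hb
    obtain ⟨n, hn⟩ := (mapClusterPt_iff_frequently.mp hbc U hU).exists
    exact hφU n hn
end

section
/- Let (E,τ) be a real locally convex space such that every countable functionally bounded subset of E has compact closure in E (i.e. E is a countably μ-space). If every subset of E that is functionally bounded in the weak topology σ(E,E') is functionally bounded in the original topology τ, then E has the Schur property. -/
open Filter Topology Bornology

/-- Let `E` be a real locally convex space which is a countably μ-space
(every countable functionally bounded set has compact closure). If `E` weakly respects
functional boundedness, then `E` has the Schur property. -/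
theorem schur_of_weakly_respects_functional_boundedness
    (E : Type*) [AddCommGroup E] [Module ℝ E] [τ : TopologicalSpace E]
    [IsTopologicalAddGroup E] [ContinuousSMul ℝ E] [LocallyConvexSpace ℝ E]
    (hcμ : ∀ A : Set E, A.Countable → FunBounded τ A → IsCompact (closure A))
    (h : ∀ A : Set E, FunBounded (weakTop E) A → FunBounded τ A) :
    HasSchur E := by
  intro u a hu
  -- τ is finer than the weak topology
  have hle : τ ≤ weakTop E := by
    rw [weakTop]
    exact continuous_iff_le_induced.mp
      (continuous_pi fun f : E →L[ℝ] ℝ => f.continuous)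
  -- the set A = {a} ∪ range u is weakly compact, hence weakly functionally bounded
  set A : Set E := insert a (Set.range u) with hA
  have hAw : @IsCompact E (weakTop E) A := by
    letI := weakTop E
    exact hu.isCompact_insert_range
  have hAfbw : FunBounded (weakTop E) A := by
    intro f hf
    letI := weakTop E
    obtain ⟨C, hC⟩ := hAw.exists_bound_of_continuousOn hf.continuousOn
    exact ⟨C, fun x hx => by simpa [Real.norm_eq_abs] using hC x hx⟩
  have hAfb : FunBounded τ A := h A hAfbw
  have hAc : A.Countable := (Set.countable_range u).insert a
  have hK : IsCompact (closure A) := hcμ A hAc hAfb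
  -- now prove convergence in τ
  by_contra hcon
  rw [tendsto_iff_forall_eventually_mem] at hcon
  push_neg at hcon
  obtain ⟨V, hV, hVn⟩ := hcon
  obtain ⟨V', hV'sub, hV'open, haV'⟩ := mem_nhds_iff.mp hV
  have hfreq : ∃ᶠ n in atTop, u n ∉ V' := by
    exact hVn.mono fun n hn hn' => hn (hV'sub hn')
  -- the filter of the subsequence staying outside V'
  set F : Filter E := Filter.map u (atTop ⊓ 𝓟 {n | u n ∉ V'}) with hF
  have hFne : F.NeBot := by
    rw [hF]
    exact Filter.map_neBot (hf := Filter.frequently_iff_neBot.mp hfreq)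
  have hFle : F ≤ 𝓟 (closure A) := by
    rw [hF]
    refine Filter.Tendsto.mono_left ?_ inf_le_left
    rw [Filter.tendsto_principal]
    exact Filter.Eventually.of_forall fun n =>
      subset_closure (Set.mem_insert_of_mem _ ⟨n, rfl⟩)
  obtain ⟨b, _, hb⟩ := hK hFle
  -- b lies outside V'
  have hbV' : b ∉ V' := by
    have h1 : ClusterPt b (𝓟 {x | x ∉ V'}) := hb.mono <| by
      rw [hF]
      refine Filter.Tendsto.mono_left ?_ inf_le_right
      rw [Filter.tendsto_principal, Filter.eventually_principal]
      exact fun n hn => hn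
    have h2 := mem_closure_iff_clusterPt.mpr h1
    exact (hV'open.isClosed_compl).closure_subset h2
  -- a and b are weakly indistinguishable
  have hmaple : F ≤ @nhds E (weakTop E) a := by
    rw [hF]
    exact (hu.mono_left inf_le_left)
  have hb' : (𝓝 b ⊓ F).NeBot := hb
  have hnb : (@nhds E (weakTop E) b ⊓ @nhds E (weakTop E) a).NeBot :=
    Filter.neBot_of_le (f := 𝓝 b ⊓ F)
      (le_inf (inf_le_left.trans (nhds_mono hle)) (inf_le_right.trans hmaple))
  have hfab : ∀ f : E →L[ℝ] ℝ, f a = f b := by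
    intro f
    have hfw : @Continuous E ℝ (weakTop E) _ f := by
      rw [weakTop, continuous_iff_le_induced]
      refine le_trans (induced_mono (continuous_iff_le_induced.mp (continuous_apply f))) ?_
      exact le_of_eq (induced_compose (g := fun p : (E →L[ℝ] ℝ) → ℝ => p f)
        (f := fun x (g : E →L[ℝ] ℝ) => g x))
    letI := weakTop E
    have h1 : Filter.map f (𝓝 b ⊓ 𝓝 a) ≤ 𝓝 (f b) ⊓ 𝓝 (f a) :=
      le_inf ((Filter.map_mono inf_le_left).trans hfw.continuousAt)
        ((Filter.map_mono inf_le_right).trans hfw.continuousAt)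
    have := Filter.neBot_of_le (f := Filter.map f (𝓝 b ⊓ 𝓝 a)) h1
    exact (eq_of_nhds_neBot this).symm
  -- by Hahn-Banach, a ∈ closure {b}
  have hacl : a ∈ closure ({b} : Set E) := by
    by_contra hac
    obtain ⟨f, c, hfc, hfb⟩ := geometric_hahn_banach_point_closed
      ((convex_singleton b).closure) isClosed_closure hac
    have := hfb b (subset_closure rfl)
    rw [hfab f] at hfc
    linarith
  -- hence b ∈ V', contradiction
  have : b ∈ V' := by
    obtain ⟨x, hx1, hx2⟩ := (mem_closure_iff.mp hacl) V' hV'open haV'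
    rwa [Set.mem_singleton_iff.mp hx2] at hx1
  exact hbV' this
end

section
/- Let (E,τ) be a real locally convex space such that every subset of E that is functionally bounded in the weak topology σ(E,E') has compact closure in the original topology τ. Then: (a) every subset of E compact in σ(E,E') is compact in τ; (b) every subset of E functionally bounded in σ(E,E') is functionally bounded in τ; and (c) E endowed with σ(E,E') is a μ-space, i.e. every functionally bounded subset of (E,σ(E,E')) has compact closure in σ(E,E'). -/
open Filter Topology Bornology

section NoTop
variable {E : Type*}

lemma funBounded_of_isCompact_any {t : TopologicalSpace E} {A : Set E}
    (hA : @IsCompact E t A) : FunBounded t A := by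
  letI := t
  intro f hf
  obtain ⟨C, hC⟩ := hA.exists_bound_of_continuousOn hf.continuousOn
  exact ⟨C, fun x hx => by simpa [Real.norm_eq_abs] using hC x hx⟩

end NoTop

section Aux

variable {E : Type*} [AddCommGroup E] [Module ℝ E] [τ : TopologicalSpace E]

lemma le_weakTop : τ ≤ weakTop E := by
  have : Continuous (fun x (f : E →L[ℝ] ℝ) => f x) := continuous_pi fun f => f.continuous
  exact continuous_iff_le_induced.mp this

lemma continuous_weakTop_clm (f : E →L[ℝ] ℝ) : @Continuous E ℝ (weakTop E) _ f := by
  have h1 : @Continuous E ((E →L[ℝ] ℝ) → ℝ) (weakTop E) Pi.topologicalSpace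
      (fun x (g : E →L[ℝ] ℝ) => g x) := continuous_induced_dom
  exact @Continuous.comp E ((E →L[ℝ] ℝ) → ℝ) ℝ (weakTop E) _ _ _ _ (continuous_apply f) h1

lemma inseparable_of_eval_eq [IsTopologicalAddGroup E] [ContinuousSMul ℝ E]
    [LocallyConvexSpace ℝ E] {a b : E} (hab : ∀ f : E →L[ℝ] ℝ, f a = f b) :
    Inseparable a b := by
  have hmem : a - b ∈ closure ({0} : Set E) := by
    by_contra hx
    rw [mem_closure_iff] at hx
    push_neg at hx
    obtain ⟨V, hVopen, hxV, hV0⟩ := hx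
    have h0V : (0 : E) ∉ V := by
      intro h0
      have hne : (V ∩ ({0} : Set E)).Nonempty := ⟨0, h0, rfl⟩
      first
      | exact hV0 hne
      | exact absurd hV0 (by simpa [Set.nonempty_iff_ne_empty] using hne)
    set x := a - b with hxdef
    have hW'open : IsOpen ((Homeomorph.subLeft x) '' V) :=
      (Homeomorph.subLeft x).isOpen_image.mpr hVopen
    have h0W' : (0 : E) ∈ (Homeomorph.subLeft x) '' V := ⟨x, hxV, by simp⟩
    have hxW' : x ∉ (Homeomorph.subLeft x) '' V := by
      rintro ⟨v, hv, hvx⟩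
      simp only [Homeomorph.subLeft_apply] at hvx
      exact h0V ((sub_eq_self.mp hvx) ▸ hv)
    obtain ⟨S, ⟨hSnhds, hSconv⟩, hSsub⟩ :=
      (LocallyConvexSpace.convex_basis_zero ℝ E).mem_iff.mp (hW'open.mem_nhds h0W')
    have h0W : (0 : E) ∈ interior S := mem_interior_iff_mem_nhds.mpr hSnhds
    have hxW : x ∉ interior S := fun hxW => hxW' (hSsub (interior_subset hxW))
    obtain ⟨f, hf⟩ := geometric_hahn_banach_open_point hSconv.interior isOpen_interior hxW
    have h1 : f 0 < f x := hf 0 h0W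
    have h2 : f x = 0 := by simp [hxdef, map_sub, hab f]
    simp [h2] at h1
  have hs1 : (0 : E) ⤳ (a - b) := specializes_iff_mem_closure.mpr hmem
  have hs2 : (a - b) ⤳ (0 : E) := by
    have := hs1.map (show Continuous (fun z : E => (a - b) - z) from
      continuous_const.sub continuous_id)
    simpa using this
  have hins : Inseparable (a - b) (0 : E) := hs2.antisymm hs1
  have := hins.map (show Continuous (fun z : E => z + b) from continuous_id.add continuous_const)
  simpa using this

lemma eval_eq_of_le_nhds {F : Filter E} [F.NeBot] {a b : E}
    (hwa : F ≤ @nhds E (weakTop E) a) (hb : F ≤ @nhds E (weakTop E) b ∨ F ≤ 𝓝 b)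
    (f : E →L[ℝ] ℝ) : f a = f b := by
  have hta : Tendsto f F (𝓝 (f a)) :=
    ((@Continuous.tendsto E ℝ (weakTop E) _ f (continuous_weakTop_clm f) a).mono_left hwa)
  have htb : Tendsto f F (𝓝 (f b)) := by
    rcases hb with hb | hb
    · exact ((@Continuous.tendsto E ℝ (weakTop E) _ f (continuous_weakTop_clm f) b).mono_left hb)
    · exact (f.continuous.tendsto b).mono_left hb
  exact tendsto_nhds_unique hta htb

lemma weak_nhds_eq_of_eval_eq {a b : E} (hab : ∀ f : E →L[ℝ] ℝ, f a = f b) :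
    @nhds E (weakTop E) a = @nhds E (weakTop E) b := by
  have : (fun f : E →L[ℝ] ℝ => f a) = (fun f : E →L[ℝ] ℝ => f b) := funext hab
  rw [weakTop, nhds_induced, nhds_induced, this]

end Aux

/-- If every weakly functionally bounded subset of a real locally convex space
has compact closure in the original topology, then (a) `E` weakly respects compactness,
(b) `E` weakly respects functional boundedness, and (c) `E` with its weak topology is a
μ-space. -/
theorem weakly_respects_of_weakly_funBounded_rel_compact
    (E : Type*) [AddCommGroup E] [Module ℝ E] [τ : TopologicalSpace E]
    [IsTopologicalAddGroup E] [ContinuousSMul ℝ E] [LocallyConvexSpace ℝ E]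
    (h : ∀ A : Set E, FunBounded (weakTop E) A → IsCompact (closure A)) :
    (∀ A : Set E, @IsCompact E (weakTop E) A → IsCompact A) ∧
    (∀ A : Set E, FunBounded (weakTop E) A → FunBounded τ A) ∧
    (∀ A : Set E, FunBounded (weakTop E) A →
      @IsCompact E (weakTop E) (@closure E (weakTop E) A)) := by
  refine ⟨?_, ?_, ?_⟩
  · -- (a)
    intro A hA
    rw [isCompact_iff_ultrafilter_le_nhds]
    intro F hF
    obtain ⟨a, haA, hFa⟩ :=
      (@isCompact_iff_ultrafilter_le_nhds E (weakTop E) A).mp hA F hF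
    have hK : IsCompact (closure A) := h A (funBounded_of_isCompact_any hA)
    obtain ⟨b, hbK, hFb⟩ := hK.ultrafilter_le_nhds F
      (le_trans hF (principal_mono.mpr subset_closure))
    have hab : ∀ f : E →L[ℝ] ℝ, f a = f b :=
      fun f => eval_eq_of_le_nhds hFa (Or.inr hFb) f
    have hins : Inseparable a b := inseparable_of_eval_eq hab
    exact ⟨a, haA, hins.nhds_eq ▸ hFb⟩
  · -- (b)
    intro A hA f hf
    have hK : IsCompact (closure A) := h A hA
    obtain ⟨C, hC⟩ := hK.exists_bound_of_continuousOn hf.continuousOn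
    exact ⟨C, fun x hx => by simpa [Real.norm_eq_abs] using hC x (subset_closure hx)⟩
  · -- (c)
    intro A hA
    have hK : IsCompact (closure A) := h A hA
    have hKw : @IsCompact E (weakTop E) (closure A) := by
      have := @IsCompact.image E E τ (weakTop E) (closure A) id hK
        (continuous_id_of_le le_weakTop)
      simpa using this
    refine @isCompact_of_finite_subcover E (weakTop E) _ ?_
    intro ι U hUopen hcover
    have hclw : IsClosed (@closure E (weakTop E) A) := by
      rw [← isOpen_compl_iff]
      exact (@isOpen_compl_iff E _ (weakTop E)).mpr (@isClosed_closure E (weakTop E) A)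
        |>.mono le_weakTop
    have hsub : closure A ⊆ @closure E (weakTop E) A :=
      closure_minimal (@subset_closure E (weakTop E) A) hclw
    obtain ⟨t, ht⟩ := @IsCompact.elim_finite_subcover E (weakTop E) (closure A) _ hKw U hUopen (hsub.trans hcover)
    refine ⟨t, fun x hx => ?_⟩
    have hxK : x ∈ @closure E (weakTop E) (closure A) :=
      (@closure_mono E (weakTop E) A (closure A) subset_closure) hx
    have hcp : @ClusterPt E (weakTop E) x (𝓟 (closure A)) :=
      (@mem_closure_iff_clusterPt E (weakTop E) x (closure A)).mp hxK
    haveI : (@nhds E (weakTop E) x ⊓ 𝓟 (closure A)).NeBot := hcp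
    set F : Ultrafilter E := Ultrafilter.of (@nhds E (weakTop E) x ⊓ 𝓟 (closure A)) with hFdef
    have hFle : ↑F ≤ @nhds E (weakTop E) x ⊓ 𝓟 (closure A) :=
      Ultrafilter.of_le _
    have hFK : ↑F ≤ 𝓟 (closure A) := hFle.trans inf_le_right
    have hFx : (F : Filter E) ≤ @nhds E (weakTop E) x := hFle.trans inf_le_left
    obtain ⟨s, hsK, hFs⟩ :=
      (@isCompact_iff_ultrafilter_le_nhds E (weakTop E) (closure A)).mp hKw F hFK
    have hxs : ∀ f : E →L[ℝ] ℝ, f x = f s :=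
      fun f => eval_eq_of_le_nhds hFx (Or.inl hFs) f
    have hnhds : @nhds E (weakTop E) x = @nhds E (weakTop E) s :=
      weak_nhds_eq_of_eval_eq hxs
    obtain ⟨i, hit, hsU⟩ : ∃ i ∈ t, s ∈ U i := by
      simpa using ht hsK
    have hUnhds : U i ∈ @nhds E (weakTop E) s :=
      @IsOpen.mem_nhds E (weakTop E) s (U i) (hUopen i) hsU
    have : x ∈ U i := @mem_of_mem_nhds E (weakTop E) x (U i) (hnhds ▸ hUnhds)
    exact Set.mem_biUnion hit this
end

section
/- Let E be a real locally convex space and let {a_n} be a sequence in E that is equivalent to the unit basis of ℓ¹, i.e. there exists a linear topological isomorphism R from the closure of the linear span of {a_n} onto a subspace of ℓ¹ with R(a_n) = e_n for every n. Then the set {a_n : n ∈ ℕ} is not functionally bounded in E endowed with the weak topology σ(E,E'). -/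
open Filter Topology Bornology
open scoped Pointwise

/-- A sequence `a` in `E` is equivalent to the unit basis of ℓ¹: there is a linear
topological isomorphism (an injective inducing linear map) from the closure of the span of
the sequence onto a subspace of ℓ¹ sending `a n` to the `n`-th unit basis vector. -/
def EquivL1Basis (E : Type*) [AddCommGroup E] [Module ℝ E] [TopologicalSpace E]
    [IsTopologicalAddGroup E] [ContinuousSMul ℝ E] (a : ℕ → E) : Prop :=
  ∃ R : ↥((Submodule.span ℝ (Set.range a)).topologicalClosure) →ₗ[ℝ] lp (fun _ : ℕ => ℝ) 1,
    IsInducing R ∧ Function.Injective R ∧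
      ∀ n : ℕ,
        R ⟨a n, Submodule.le_topologicalClosure _
            (Submodule.subset_span (Set.mem_range_self n))⟩ = lp.single 1 n 1

private lemma contAux {α β γ : Type*} {tα : TopologicalSpace α} [TopologicalSpace β]
    [TopologicalSpace γ] {g : β → γ} {f : α → β} {s : Set β} (hg : ContinuousOn g s)
    (hf : @Continuous α β tα _ f) (h : ∀ x, f x ∈ s) :
    @Continuous α γ tα _ fun x => g (f x) := by
  letI := tα
  exact hg.comp_continuous hf h

/-- A sequence equivalent to the unit basis of ℓ¹ is not functionally bounded
in the weak topology. -/
theorem l1_basis_sequence_not_weakly_functionally_bounded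
    (E : Type*) [AddCommGroup E] [Module ℝ E] [TopologicalSpace E]
    [IsTopologicalAddGroup E] [ContinuousSMul ℝ E] [LocallyConvexSpace ℝ E]
    (a : ℕ → E) (ha : EquivL1Basis E a) :
    ¬ FunBounded (weakTop E) (Set.range a) := by
  intro hFB
  obtain ⟨R, hRind, -, hRval⟩ := ha
  let M : Submodule ℝ E := (Submodule.span ℝ (Set.range a)).topologicalClosure
  -- the elements of the sequence as elements of M
  let ι : ℕ → M := fun n => ⟨a n, Submodule.le_topologicalClosure _
      (Submodule.subset_span (Set.mem_range_self n))⟩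
  have hRι : ∀ n, R (ι n) = lp.single 1 n 1 := hRval
  -- summability facts
  have hsum : ∀ y : M, Summable fun j : ℕ => ‖(R y) j‖ := by
    intro y
    have h1 : (0:ℝ) < (1 : ENNReal).toReal := by norm_num
    have := (lp.memℓp (R y)).summable h1
    simpa [Real.rpow_one] using this
  have hsum' : ∀ y : M, Summable fun j : ℕ => (R y) j := fun y => (hsum y).of_norm
  have hnorm : ∀ y : M, ‖R y‖ = ∑' j : ℕ, ‖(R y) j‖ := by
    intro y
    have h1 : (0:ℝ) < (1 : ENNReal).toReal := by norm_num
    rw [lp.norm_eq_tsum_rpow h1]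
    simp [Real.rpow_one]
  -- the tail functionals on M
  let τ : ℕ → (M →ₗ[ℝ] ℝ) := fun k =>
    { toFun := fun y => (∑' j : ℕ, (R y) j) - ∑ j ∈ Finset.range k, (R y) j
      map_add' := by
        intro y z
        have h1 : ⇑(R (y + z)) = ⇑(R y) + ⇑(R z) := by rw [map_add]; exact lp.coeFn_add _ _
        simp only [h1, Pi.add_apply]
        rw [Summable.tsum_add (hsum' y) (hsum' z), Finset.sum_add_distrib]
        ring
      map_smul' := by
        intro c y
        have h1 : ⇑(R (c • y)) = c • ⇑(R y) := by rw [map_smul]; exact lp.coeFn_smul _ _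
        simp only [h1, Pi.smul_apply, smul_eq_mul, RingHom.id_apply]
        rw [tsum_mul_left, ← Finset.mul_sum]
        ring }
  have hτtail : ∀ (k : ℕ) (y : M), τ k y = ∑' j : ℕ, (R y) (j + k) := by
    intro k y
    have e1 := Summable.sum_add_tsum_nat_add (f := fun j : ℕ => (R y) j) k (hsum' y)
    show (∑' j : ℕ, (R y) j) - ∑ j ∈ Finset.range k, (R y) j = _
    linarith
  have htail : ∀ (k : ℕ) (y : M), |τ k y| ≤ ‖R y‖ := by
    intro k y
    rw [hτtail k y]
    have h2 : Summable fun j : ℕ => ‖(R y) (j + k)‖ :=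
      (summable_nat_add_iff (f := fun j : ℕ => ‖(R y) j‖) k).2 (hsum y)
    have h3 : ‖∑' j : ℕ, (R y) (j + k)‖ ≤ ∑' j : ℕ, ‖(R y) (j + k)‖ :=
      norm_tsum_le_tsum_norm h2
    have e2 := Summable.sum_add_tsum_nat_add (f := fun j : ℕ => ‖(R y) j‖) k (hsum y)
    have h4 : (0:ℝ) ≤ ∑ j ∈ Finset.range k, ‖(R y) j‖ :=
      Finset.sum_nonneg fun j _ => norm_nonneg _
    rw [hnorm y]
    rw [Real.norm_eq_abs] at h3
    linarith
  have hτval : ∀ k n : ℕ, τ k (ι n) = if k ≤ n then (1:ℝ) else 0 := by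
    intro k n
    have hcoord : ∀ j : ℕ, (R (ι n)) j = if j = n then (1:ℝ) else 0 := by
      intro j
      rw [hRι n]
      by_cases h : j = n
      · simp [h, lp.single_apply]
      · simp [h, lp.single_apply]
    show (∑' j : ℕ, (R (ι n)) j) - ∑ j ∈ Finset.range k, (R (ι n)) j = _
    simp only [hcoord]
    rw [tsum_ite_eq n (fun _ => (1:ℝ)), Finset.sum_ite_eq' (Finset.range k) n (fun _ => (1:ℝ))]
    by_cases h : k ≤ n
    · simp [Finset.mem_range, h, not_lt.mpr h]
    · push_neg at h
      simp [Finset.mem_range, h, not_le.mpr h]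
  -- construct the open convex symmetric neighborhood W₀ with control on M
  have hBopen : IsOpen {y : M | ‖R y‖ < 1} :=
    isOpen_lt (hRind.continuous.norm) continuous_const
  obtain ⟨U, hUopen, hUpre⟩ := isOpen_induced_iff.mp hBopen
  have h0U : (0 : E) ∈ U := by
    have h0 : (0 : M) ∈ Subtype.val ⁻¹' U := by
      rw [hUpre]
      show ‖R 0‖ < 1
      simp
    simpa using h0
  obtain ⟨W, ⟨hWnhds, hWconv⟩, hWU⟩ :=
    (LocallyConvexSpace.convex_basis (𝕜 := ℝ) (0 : E)).mem_iff.mp (hUopen.mem_nhds h0U)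
  let W₀ : Set E := interior W ∩ -interior W
  have hW₀open : IsOpen W₀ := isOpen_interior.inter isOpen_interior.neg
  have h0W' : (0 : E) ∈ interior W := mem_interior_iff_mem_nhds.2 hWnhds
  have h0W₀ : (0 : E) ∈ W₀ := ⟨h0W', by rw [Set.mem_neg, neg_zero]; exact h0W'⟩
  have hW₀conv : Convex ℝ W₀ := hWconv.interior.inter hWconv.interior.neg
  have hW₀symm : ∀ x ∈ W₀, -x ∈ W₀ := by
    intro x hx
    exact ⟨Set.mem_neg.mp hx.2, by rw [Set.mem_neg, neg_neg]; exact hx.1⟩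
  have hW₀U : W₀ ⊆ U := fun x hx => hWU (interior_subset hx.1)
  have habs : Absorbent ℝ W₀ := absorbent_nhds_zero (hW₀open.mem_nhds h0W₀)
  set p : E → ℝ := gauge W₀ with hpdef
  have hpsymm : ∀ x : E, p (-x) = p x := gauge_neg hW₀symm
  have hpnonneg : ∀ x : E, 0 ≤ p x := fun x => gauge_nonneg x
  -- the norm of R is dominated by the gauge on M
  have hRp : ∀ y : M, ‖R y‖ ≤ p (y : E) := by
    intro y
    refine le_of_forall_gt_imp_ge_of_dense ?_
    intro t ht
    obtain ⟨r, hr0, hrt, hyr⟩ := exists_lt_of_gauge_lt habs ht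
    have hz : r⁻¹ • (y : E) ∈ W₀ := (Set.mem_smul_set_iff_inv_smul_mem₀ hr0.ne' _ _).mp hyr
    have hzU : r⁻¹ • (y : E) ∈ U := hW₀U hz
    have hzM : (r⁻¹ • y : M) ∈ Subtype.val ⁻¹' U := by
      simpa using hzU
    rw [hUpre] at hzM
    have hlt : ‖R (r⁻¹ • y)‖ < 1 := hzM
    have : ‖R y‖ = r * ‖R (r⁻¹ • y)‖ := by
      rw [map_smul, norm_smul]
      simp [abs_of_pos hr0, abs_of_nonneg (inv_nonneg.mpr hr0.le)]
      rw [← mul_assoc, mul_inv_cancel₀ hr0.ne', one_mul]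
    rw [this]
    nlinarith [norm_nonneg (R (r⁻¹ • y))]
  -- linear functionals dominated by the gauge are continuous
  have hcont : ∀ (φ : E →ₗ[ℝ] ℝ) (c : ℝ), 0 ≤ c → (∀ x, |φ x| ≤ c * p x) → Continuous φ := by
    intro φ c hc hφ
    refine continuous_of_continuousAt_zero φ ?_
    rw [ContinuousAt, map_zero, Metric.tendsto_nhds]
    intro ε hε
    have hs : (0:ℝ) < ε / (2 * (c + 1)) := by positivity
    refine Filter.eventually_iff_exists_mem.mpr
      ⟨(ε / (2 * (c + 1))) • W₀, (hW₀open.smul₀ hs.ne').mem_nhds ?_, ?_⟩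
    · exact ⟨0, h0W₀, smul_zero _⟩
    · intro x hx
      have hpx : p x ≤ ε / (2 * (c + 1)) := gauge_le_of_mem hs.le hx
      have h1 : |φ x| ≤ c * p x := hφ x
      have h2 : c * p x ≤ c * (ε / (2 * (c + 1))) := mul_le_mul_of_nonneg_left hpx hc
      rw [Real.dist_eq, sub_zero]
      have h3 : c * (ε / (2 * (c + 1))) < ε := by
        rw [mul_div_assoc', div_lt_iff₀ (by positivity : (0:ℝ) < 2 * (c + 1))]
        nlinarith
      linarith
  -- Hahn-Banach extensions of the tail functionals
  have hHB : ∀ k : ℕ, ∃ g : E →ₗ[ℝ] ℝ,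
      (∀ y : M, g (y : E) = τ k y) ∧ ∀ x, g x ≤ p x := by
    intro k
    obtain ⟨g, hg1, hg2⟩ := exists_extension_of_le_sublinear ⟨M, τ k⟩ p
      (fun c hc x => by rw [hpdef, gauge_smul_of_nonneg hc.le, smul_eq_mul])
      (fun x y => gauge_add_le hW₀conv habs x y)
      (fun y => (le_abs_self _).trans ((htail k y).trans (hRp y)))
    exact ⟨g, fun y => hg1 y, hg2⟩
  choose f hfτ hfle using hHB
  have habsf : ∀ (k : ℕ) (x : E), |f k x| ≤ p x := by
    intro k x
    refine abs_le.mpr ⟨?_, hfle k x⟩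
    have h1 := hfle k (-x)
    rw [map_neg, hpsymm x] at h1
    linarith
  -- the compact set of pointwise bounded linear functionals
  set 𝒦 : Set (E → ℝ) := {μ | (∀ x y, μ (x + y) = μ x + μ y) ∧
      (∀ (c : ℝ) x, μ (c • x) = c * μ x) ∧ ∀ x, |μ x| ≤ p x} with h𝒦def
  have h𝒦closed : IsClosed 𝒦 := by
    have e : 𝒦 = (⋂ (x : E), ⋂ (y : E), {μ : E → ℝ | μ (x + y) = μ x + μ y}) ∩
        ((⋂ (c : ℝ), ⋂ (x : E), {μ : E → ℝ | μ (c • x) = c * μ x}) ∩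
        ⋂ (x : E), {μ : E → ℝ | |μ x| ≤ p x}) := by
      ext μ; simp [h𝒦def, Set.mem_iInter]
    rw [e]
    refine IsClosed.inter ?_ (IsClosed.inter ?_ ?_)
    · exact isClosed_iInter fun x => isClosed_iInter fun y =>
        isClosed_eq (continuous_apply (x + y)) ((continuous_apply x).add (continuous_apply y))
    · exact isClosed_iInter fun c => isClosed_iInter fun x =>
        isClosed_eq (continuous_apply (c • x)) (continuous_const.mul (continuous_apply x))
    · exact isClosed_iInter fun x =>
        isClosed_le ((continuous_apply x).abs) continuous_const
  have h𝒦cpt : IsCompact 𝒦 := by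
    refine IsCompact.of_isClosed_subset
      (isCompact_univ_pi fun x : E => isCompact_Icc (a := -(p x)) (b := p x)) h𝒦closed ?_
    intro μ hμ
    rw [Set.mem_univ_pi]
    intro x
    exact abs_le.mp (hμ.2.2 x)
  have hfmem : ∀ k : ℕ, ⇑(f k) ∈ 𝒦 := by
    intro k
    refine ⟨fun x y => map_add _ _ _, fun c x => ?_, habsf k⟩
    rw [map_smul]; rfl
  -- a cluster point of the sequence of extensions
  have hle : Filter.map (fun k => ⇑(f k)) Filter.atTop ≤ Filter.principal 𝒦 := by
    rw [Filter.le_principal_iff, Filter.mem_map]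
    exact Filter.univ_mem' hfmem
  obtain ⟨Λ, hΛK, hclus⟩ := h𝒦cpt.exists_clusterPt hle
  -- frequently, f k is close to Λ pointwise
  have hfreq : ∀ (x : E) (ε : ℝ), 0 < ε → ∀ K : ℕ, ∃ k, K ≤ k ∧ |f k x - Λ x| < ε := by
    intro x ε hε K
    have hop : IsOpen {μ : E → ℝ | |μ x - Λ x| < ε} :=
      isOpen_lt (((continuous_apply x).sub continuous_const).abs) continuous_const
    have hnb : {μ : E → ℝ | |μ x - Λ x| < ε} ∈ 𝓝 Λ := hop.mem_nhds (by simp [hε])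
    have hV : (fun k => ⇑(f k)) '' Set.Ici K ∈ Filter.map (fun k => ⇑(f k)) Filter.atTop :=
      Filter.image_mem_map (Filter.Ici_mem_atTop K)
    obtain ⟨μ, hμ1, hμ2⟩ := (clusterPt_iff_nonempty.mp hclus) hnb hV
    obtain ⟨k, hk, rfl⟩ := hμ2
    exact ⟨k, hk, hμ1⟩
  -- values of f k on the sequence, and Λ vanishes on the sequence
  have hfval : ∀ k n : ℕ, f k (a n) = if k ≤ n then (1:ℝ) else 0 := by
    intro k n
    have h1 : f k ((ι n : M) : E) = τ k (ι n) := hfτ k (ι n)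
    rw [hτval] at h1
    exact h1
  have hΛa : ∀ n : ℕ, Λ (a n) = 0 := by
    intro n
    by_contra hne
    obtain ⟨k, hk, hlt⟩ := hfreq (a n) (|Λ (a n)|) (abs_pos.mpr hne) (n + 1)
    rw [hfval k n, if_neg (by omega), zero_sub, abs_neg] at hlt
    exact lt_irrefl _ hlt
  -- Λ as a continuous linear functional
  obtain ⟨hΛadd, hΛsmul, hΛbd⟩ := hΛK
  let Λℓ : E →ₗ[ℝ] ℝ :=
    { toFun := Λ
      map_add' := hΛadd
      map_smul' := fun c x => by simp [hΛsmul c x] }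
  -- the continuous linear functionals g k = f k - Λ
  have hgcont : ∀ k : ℕ, Continuous (⇑(f k - Λℓ)) := by
    intro k
    refine hcont (f k - Λℓ) 2 (by norm_num) ?_
    intro x
    have h1 : |f k x - Λ x| ≤ |f k x| + |Λ x| := abs_sub _ _
    have h2 := habsf k x
    have h3 := hΛbd x
    show |f k x - Λ x| ≤ 2 * p x
    linarith
  let g : ℕ → (E →L[ℝ] ℝ) := fun k => ⟨f k - Λℓ, hgcont k⟩
  have hgval : ∀ (k : ℕ) (x : E), g k x = f k x - Λ x := fun k x => rfl
  have hgan : ∀ k n : ℕ, k ≤ n → g k (a n) = 1 := by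
    intro k n hkn
    rw [hgval, hfval, if_pos hkn, hΛa, sub_zero]
  have hgsmall : ∀ x : E, ∃ k : ℕ, g k x < 1 / 2 := by
    intro x
    obtain ⟨k, -, hlt⟩ := hfreq x (1 / 2) (by norm_num) 0
    exact ⟨k, lt_of_le_of_lt (le_abs_self _) hlt⟩
  -- the clamp function
  let σ : ℝ → ℝ := fun t => max 0 (min 1 t)
  have hσcont : Continuous σ := continuous_const.max (continuous_const.min continuous_id)
  have hσ0 : ∀ t, 0 ≤ σ t := fun t => le_max_left _ _
  have hσ1 : ∀ t, σ t ≤ 1 := fun t => max_le (by norm_num) (min_le_left _ _)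
  have hσone : σ 1 = 1 := by norm_num [σ]
  have hσhalf : ∀ t : ℝ, t < 1 / 2 → σ t ≤ 1 / 2 := fun t ht =>
    max_le (by norm_num) ((min_le_right _ _).trans ht.le)
  -- the weights
  let w : ℕ → ℝ := fun k => (2⁻¹ : ℝ) ^ (k + 1)
  have hwpos : ∀ k, 0 < w k := fun k => by positivity
  have hwsum : Summable w := by
    have h1 : Summable (fun k : ℕ => (2⁻¹ : ℝ) ^ k) :=
      summable_geometric_of_lt_one (by norm_num) (by norm_num)
    have h2 := h1.mul_right (2⁻¹ : ℝ)
    refine h2.congr fun k => ?_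
    show (2⁻¹:ℝ) ^ k * 2⁻¹ = (2⁻¹:ℝ) ^ (k+1)
    rw [pow_succ]
  have hwtot : ∑' k, w k = 1 := by
    have h1 : ∑' k : ℕ, (2⁻¹ : ℝ) ^ (k+1) = (∑' k : ℕ, (2⁻¹:ℝ) ^ k) * 2⁻¹ := by
      rw [← tsum_mul_right]
      exact tsum_congr fun k => (pow_succ _ _)
    show ∑' k : ℕ, (2⁻¹ : ℝ) ^ (k+1) = 1
    rw [h1, tsum_geometric_of_lt_one (by norm_num) (by norm_num)]
    norm_num
  -- the function S̃ on the product space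
  let D := E →L[ℝ] ℝ
  let St : (D → ℝ) → ℝ := fun φ => ∑' k : ℕ, w k * σ (φ (g k))
  have hterm_nonneg : ∀ (φ : D → ℝ) (k : ℕ), 0 ≤ w k * σ (φ (g k)) :=
    fun φ k => mul_nonneg (hwpos k).le (hσ0 _)
  have hterm_le : ∀ (φ : D → ℝ) (k : ℕ), w k * σ (φ (g k)) ≤ w k := fun φ k => by
    have := mul_le_mul_of_nonneg_left (hσ1 (φ (g k))) (hwpos k).le
    simpa using this
  have hterm_sum : ∀ φ : D → ℝ, Summable fun k => w k * σ (φ (g k)) := fun φ =>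
    Summable.of_nonneg_of_le (hterm_nonneg φ) (hterm_le φ) hwsum
  have hStcont : Continuous St := by
    refine continuous_tsum (f := fun k (φ : D → ℝ) => w k * σ (φ (g k))) (u := w)
      (fun k => continuous_const.mul (hσcont.comp (continuous_apply (g k)))) hwsum ?_
    intro k φ
    have h := abs_le.mpr ⟨by linarith [hσ0 (φ (g k))], hσ1 (φ (g k))⟩
    calc ‖w k * σ (φ (g k))‖ = w k * |σ (φ (g k))| := by
          rw [Real.norm_eq_abs, abs_mul, abs_of_pos (hwpos k)]
      _ ≤ w k * 1 := mul_le_mul_of_nonneg_left h (hwpos k).le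
      _ = w k := mul_one _
  -- St < 1 whenever one of the coordinates is small
  have hStlt : ∀ φ : D → ℝ, (∃ k, σ (φ (g k)) ≤ 1 / 2) → St φ < 1 := by
    intro φ ⟨k₀, hk₀⟩
    have hsumite : Summable fun k : ℕ => ite (k = k₀) 0 (w k * σ (φ (g k))) := by
      refine Summable.of_nonneg_of_le (fun k => ?_) (fun k => ?_) hwsum
      · by_cases h : k = k₀
        · rw [if_pos h]
        · rw [if_neg h]; exact hterm_nonneg φ k
      · by_cases h : k = k₀
        · rw [if_pos h]; exact (hwpos k).le
        · rw [if_neg h]; exact hterm_le φ k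
    have hsumitew : Summable fun k : ℕ => ite (k = k₀) 0 (w k) := by
      refine Summable.of_nonneg_of_le (fun k => ?_) (fun k => ?_) hwsum
      · by_cases h : k = k₀
        · rw [if_pos h]
        · rw [if_neg h]; exact (hwpos k).le
      · by_cases h : k = k₀
        · rw [if_pos h]; exact (hwpos k).le
        · rw [if_neg h]
    have e1 : St φ = w k₀ * σ (φ (g k₀)) + ∑' k, ite (k = k₀) 0 (w k * σ (φ (g k))) :=
      Summable.tsum_eq_add_tsum_ite (hterm_sum φ) k₀
    have e2 : (1:ℝ) = w k₀ + ∑' k, ite (k = k₀) 0 (w k) := by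
      rw [← hwtot]; exact Summable.tsum_eq_add_tsum_ite hwsum k₀
    have h3 : (∑' k, ite (k = k₀) 0 (w k * σ (φ (g k)))) ≤ ∑' k, ite (k = k₀) 0 (w k) := by
      refine Summable.tsum_le_tsum (fun k => ?_) hsumite hsumitew
      by_cases h : k = k₀
      · rw [if_pos h, if_pos h]
      · rw [if_neg h, if_neg h]; exact hterm_le φ k
    have h4 : w k₀ * σ (φ (g k₀)) ≤ w k₀ * (1/2) :=
      mul_le_mul_of_nonneg_left hk₀ (hwpos k₀).le
    have h5 := hwpos k₀
    rw [e1]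
    linarith
  have hmem1 : ∀ x : E, St (fun φ : D => φ x) < 1 := by
    intro x
    obtain ⟨k, hk⟩ := hgsmall x
    exact hStlt (fun φ : D => φ x) ⟨k, hσhalf (g k x) hk⟩
  -- lower bound along the sequence
  have hgeom : ∀ m : ℕ, ∑ k ∈ Finset.range m, w k = 1 - (2⁻¹:ℝ) ^ m := by
    intro m
    induction m with
    | zero => simp
    | succ m ih =>
      rw [Finset.sum_range_succ, ih]
      show 1 - (2⁻¹:ℝ)^m + (2⁻¹:ℝ)^(m+1) = 1 - (2⁻¹:ℝ)^(m+1)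
      simp only [pow_succ]
      ring
  have hlow : ∀ n : ℕ, 1 - (2⁻¹:ℝ) ^ (n+1) ≤ St (fun φ : D => φ (a n)) := by
    intro n
    have e1 : ∑ k ∈ Finset.range (n+1), w k
        = ∑ k ∈ Finset.range (n+1), w k * σ (g k (a n)) := by
      refine Finset.sum_congr rfl fun k hk => ?_
      rw [hgan k n (by simpa [Nat.lt_succ_iff] using Finset.mem_range.mp hk), hσone, mul_one]
    calc 1 - (2⁻¹:ℝ) ^ (n+1) = ∑ k ∈ Finset.range (n+1), w k := (hgeom (n+1)).symm
      _ = ∑ k ∈ Finset.range (n+1), w k * σ (g k (a n)) := e1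
      _ ≤ ∑' k, w k * σ (g k (a n)) :=
          Summable.sum_le_tsum (f := fun k : ℕ => w k * σ (g k (a n))) _
            (fun k _ => hterm_nonneg (fun φ : D => φ (a n)) k)
            (hterm_sum (fun φ : D => φ (a n)))
  -- the weakly continuous unbounded function
  let Φ : E → ℝ := fun x => (1 - St (fun φ : D => φ x))⁻¹
  have hembc : @Continuous E ((E →L[ℝ] ℝ) → ℝ) (weakTop E) _ (fun x (f : E →L[ℝ] ℝ) => f x) :=
    continuous_induced_dom
  have hGon : ContinuousOn (fun φ : (E →L[ℝ] ℝ) → ℝ => (1 - St φ)⁻¹) {φ | St φ < 1} := by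
    refine ContinuousOn.inv₀ ((continuous_const.sub hStcont).continuousOn) ?_
    intro φ hφ
    exact (sub_pos.mpr hφ).ne'
  have hΦcont : @Continuous E ℝ (weakTop E) _ Φ :=
    contAux (g := fun φ : (E →L[ℝ] ℝ) → ℝ => (1 - St φ)⁻¹)
      (f := fun x (f : E →L[ℝ] ℝ) => f x) (s := {φ | St φ < 1})
      hGon hembc (fun x => hmem1 x)
  obtain ⟨C, hC⟩ := hFB Φ hΦcont
  obtain ⟨n, hn⟩ := pow_unbounded_of_one_lt (y := (2:ℝ)) C one_lt_two
  have h1 := hC (a n) ⟨n, rfl⟩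
  have hd : 0 < 1 - St (fun φ : D => φ (a n)) := sub_pos.mpr (hmem1 (a n))
  have hd2 : 1 - St (fun φ : D => φ (a n)) ≤ (2⁻¹:ℝ)^(n+1) := by linarith [hlow n]
  have h2 : ((2⁻¹:ℝ)^(n+1))⁻¹ ≤ Φ (a n) := inv_anti₀ hd hd2
  have h3 : ((2⁻¹:ℝ)^(n+1))⁻¹ = (2:ℝ)^(n+1) := by rw [← inv_pow, inv_inv]
  have h4 : (2:ℝ)^n ≤ (2:ℝ)^(n+1) := by
    have h5 : (2:ℝ)^n * 1 ≤ (2:ℝ)^n * 2 := by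
      have : (0:ℝ) < 2^n := by positivity
      nlinarith
    calc (2:ℝ)^n = 2^n * 1 := (mul_one _).symm
      _ ≤ 2^n * 2 := h5
      _ = 2^(n+1) := (pow_succ 2 n).symm
  have h5 : Φ (a n) ≤ |Φ (a n)| := le_abs_self _
  rw [h3] at h2
  linarith
end

section
/- Let T : ℓ¹ → ℓ^∞ be a linear isometric embedding of the real Banach space ℓ¹ into the real Banach space ℓ^∞. Then the set {T(e_n) : n ∈ ℕ}, where e_n is the n-th unit basis vector of ℓ¹, is not functionally bounded in ℓ^∞ endowed with its weak topology σ(ℓ^∞,(ℓ^∞)'). -/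
set_option maxHeartbeats 1000000
set_option synthInstance.maxHeartbeats 200000

open Filter Topology Bornology

section AuxiliaryForStatement8

noncomputable section FBaux

private lemma exists_tendsto_ulim (q : Ultrafilter ℕ) {u : ℕ → ℝ} {C : ℝ}
    (h : ∀ n, |u n| ≤ C) : ∃ a, Tendsto u (q : Filter ℕ) (𝓝 a) := by
  obtain ⟨a, -, ha⟩ := (isCompact_Icc (a := -C) (b := C)).ultrafilter_le_nhds (q.map u)
    (by
      rw [Ultrafilter.coe_map, le_principal_iff, mem_map]
      exact univ_mem' fun n => abs_le.1 (h n))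
  exact ⟨a, ha⟩

open Classical in
private def ulim (q : Ultrafilter ℕ) (u : ℕ → ℝ) : ℝ :=
  if h : ∃ a, Tendsto u (q : Filter ℕ) (𝓝 a) then h.choose else 0

private lemma tendsto_ulim (q : Ultrafilter ℕ) {u : ℕ → ℝ} {C : ℝ} (h : ∀ n, |u n| ≤ C) :
    Tendsto u (q : Filter ℕ) (𝓝 (ulim q u)) := by
  have he := exists_tendsto_ulim q h
  rw [ulim]
  rw [dif_pos he]
  exact he.choose_spec

variable {E : Type*} [NormedAddCommGroup E] [NormedSpace ℝ E]

/-- The `q`-limit of a pointwise-bounded sequence of continuous linear functionals. -/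
private def ulimCLM (q : Ultrafilter ℕ) (φ : ℕ → E →L[ℝ] ℝ)
    (hφ : ∀ n x, |φ n x| ≤ ‖x‖) : E →L[ℝ] ℝ :=
  LinearMap.mkContinuous
    { toFun := fun x => ulim q (fun n => φ n x)
      map_add' := fun x y => by
        refine tendsto_nhds_unique (tendsto_ulim q (u := fun n => φ n (x + y))
          (C := ‖x + y‖) (fun n => hφ n _)) ?_
        have h1 := tendsto_ulim q (u := fun n => φ n x) (C := ‖x‖) (fun n => hφ n _)
        have h2 := tendsto_ulim q (u := fun n => φ n y) (C := ‖y‖) (fun n => hφ n _)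
        simpa [map_add] using h1.add h2
      map_smul' := fun c x => by
        refine tendsto_nhds_unique (tendsto_ulim q (u := fun n => φ n (c • x))
          (C := ‖c • x‖) (fun n => hφ n _)) ?_
        have h1 := tendsto_ulim q (u := fun n => φ n x) (C := ‖x‖) (fun n => hφ n _)
        simpa [map_smul, smul_eq_mul] using h1.const_mul c }
    1
    (fun x => by
      rw [one_mul]
      have h1 := (tendsto_ulim q (u := fun n => φ n x) (C := ‖x‖) (fun n => hφ n _)).abs
      simp only [Real.norm_eq_abs]
      exact le_of_tendsto h1 (Eventually.of_forall fun n => hφ n x))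

private lemma ulimCLM_tendsto (q : Ultrafilter ℕ) (φ : ℕ → E →L[ℝ] ℝ)
    (hφ : ∀ n x, |φ n x| ≤ ‖x‖) (x : E) :
    Tendsto (fun n => φ n x) (q : Filter ℕ) (𝓝 (ulimCLM q φ hφ x)) :=
  tendsto_ulim q (C := ‖x‖) (fun n => hφ n x)

private lemma ulimCLM_bound (q : Ultrafilter ℕ) (φ : ℕ → E →L[ℝ] ℝ)
    (hφ : ∀ n x, |φ n x| ≤ ‖x‖) (x : E) : |ulimCLM q φ hφ x| ≤ ‖x‖ :=
  le_of_tendsto (ulimCLM_tendsto q φ hφ x).abs (Eventually.of_forall fun n => hφ n x)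

/-- evaluation at a coordinate as a continuous linear functional on ℓ^∞ -/
private def coordCLM (j : ℕ) : lp (fun _ : ℕ => ℝ) ⊤ →L[ℝ] ℝ :=
  LinearMap.mkContinuous
    { toFun := fun x => x j
      map_add' := fun x y => by simp [lp.coeFn_add]
      map_smul' := fun c x => by simp [lp.coeFn_smul] }
    1
    (fun x => by
      rw [one_mul]
      exact lp.norm_apply_le_norm ENNReal.top_ne_zero x j)

private lemma coordCLM_apply (j : ℕ) (x : lp (fun _ : ℕ => ℝ) ⊤) : coordCLM j x = x j := rfl

/-- evaluation against a fixed functional is continuous for the weak topology -/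
private lemma weakTop_cont_eval {E : Type*} [AddCommGroup E] [Module ℝ E] [TopologicalSpace E]
    (φ : E →L[ℝ] ℝ) :
    @Continuous E ℝ (TopologicalSpace.induced (fun x (f : E →L[ℝ] ℝ) => f x) Pi.topologicalSpace)
      _ (fun x => φ x) := by
  have h1 : @Continuous E ((E →L[ℝ] ℝ) → ℝ)
      (TopologicalSpace.induced (fun x (f : E →L[ℝ] ℝ) => f x) Pi.topologicalSpace)
      Pi.topologicalSpace (fun x (f : E →L[ℝ] ℝ) => f x) := continuous_induced_dom
  exact @Continuous.comp E ((E →L[ℝ] ℝ) → ℝ) ℝ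
    (TopologicalSpace.induced (fun x (f : E →L[ℝ] ℝ) => f x) Pi.topologicalSpace)
    Pi.topologicalSpace _ _ _ (continuous_apply φ) h1

end FBaux

open Filter Topology

private lemma term_bound {m : ℕ} (u : ℕ → ℝ) (hu : ∀ n, |u n| ≤ 1)
    (hS : (m : ℝ) + 1/2 ≤ ∑ n ∈ Finset.range (m+1), u n) : ∀ n ≤ m, 1/2 ≤ u n := by
  intro n₀ hn₀
  have hmem : n₀ ∈ Finset.range (m+1) := Finset.mem_range.2 (Nat.lt_succ_of_le hn₀)
  have hsplit : u n₀ + ∑ n ∈ (Finset.range (m+1)).erase n₀, u n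
      = ∑ n ∈ Finset.range (m+1), u n := Finset.add_sum_erase _ u hmem
  have hle : ∑ n ∈ (Finset.range (m+1)).erase n₀, u n ≤ (m : ℝ) := by
    calc ∑ n ∈ (Finset.range (m+1)).erase n₀, u n
        ≤ ∑ _n ∈ (Finset.range (m+1)).erase n₀, (1:ℝ) :=
          Finset.sum_le_sum fun n _ => (abs_le.1 (hu n)).2
      _ = (((Finset.range (m+1)).erase n₀).card : ℝ) := by simp
      _ = (m : ℝ) := by
          rw [Finset.card_erase_of_mem hmem, Finset.card_range]
          simp
  linarith

private lemma key_pattern (T : lp (fun _ : ℕ => ℝ) 1 →ₗᵢ[ℝ] lp (fun _ : ℕ => ℝ) ⊤)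
    (k m : ℕ) :
    (∃ j, ∀ n ≤ m, 1/2 ≤ (if n < k then (-1:ℝ) else 1) * (T (lp.single 1 n 1) : ℕ → ℝ) j) ∨
    (∃ j, ∀ n ≤ m, (if n < k then (-1:ℝ) else 1) * (T (lp.single 1 n 1) : ℕ → ℝ) j ≤ -(1/2)) := by
  set s : ℕ → ℝ := fun n => if n < k then (-1:ℝ) else 1 with hs_def
  have hs : ∀ n, ‖s n‖ = 1 := by
    intro n; simp only [hs_def]; split <;> simp
  set v : lp (fun _ : ℕ => ℝ) 1 := ∑ n ∈ Finset.range (m+1), lp.single 1 n (s n) with hv_def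
  have hv : ‖v‖ = (m : ℝ) + 1 := by
    have h := lp.norm_sum_single (p := 1) (by norm_num) s (Finset.range (m+1))
    simp only [ENNReal.toReal_one, Real.rpow_one, hs] at h
    rw [hv_def, h]
    simp
  have hTv : ‖T v‖ = (m : ℝ) + 1 := by rw [T.norm_map]; exact hv
  have hTvj : ∀ j, (T v : ℕ → ℝ) j
      = ∑ n ∈ Finset.range (m+1), s n * (T (lp.single 1 n 1) : ℕ → ℝ) j := by
    intro j
    have h1 : T v = ∑ n ∈ Finset.range (m+1), s n • T (lp.single 1 n 1) := by
      rw [hv_def, map_sum]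
      refine Finset.sum_congr rfl fun n _ => ?_
      have e1 : (lp.single 1 n (s n) : lp (fun _ : ℕ => ℝ) 1)
          = s n • (lp.single 1 n (1:ℝ) : lp (fun _ : ℕ => ℝ) 1) := by
        rw [← lp.single_smul (E := fun _ : ℕ => ℝ) (1 : ENNReal) n (s n) (1:ℝ), smul_eq_mul,
          mul_one]
      rw [e1]
      exact T.map_smul _ _
    rw [h1, lp.coeFn_sum]
    rw [Finset.sum_apply]
    refine Finset.sum_congr rfl fun n _ => ?_
    rw [lp.coeFn_smul]
    rfl
  obtain ⟨j, hj⟩ : ∃ j, (m : ℝ) + 1/2 < ‖(T v : ℕ → ℝ) j‖ := by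
    have hb : BddAbove (Set.range fun j => ‖(T v : ℕ → ℝ) j‖) :=
      memℓp_infty_iff.1 (lp.memℓp (T v))
    have h2 : (m : ℝ) + 1/2 < ⨆ j, ‖(T v : ℕ → ℝ) j‖ := by
      rw [← lp.norm_eq_ciSup, hTv]; linarith
    exact (lt_ciSup_iff hb).1 h2
  have hxb : ∀ n, |(T (lp.single 1 n (1:ℝ)) : ℕ → ℝ) j| ≤ 1 := by
    intro n
    have hxn : ‖T (lp.single 1 n (1:ℝ))‖ = 1 := by
      rw [T.norm_map]
      have h := lp.norm_single (p := 1) (E := fun _ : ℕ => ℝ) (by norm_num)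
        n (1:ℝ)
      simpa using h
    have h2 := lp.norm_apply_le_norm ENNReal.top_ne_zero (T (lp.single 1 n (1:ℝ))) j
    rw [hxn] at h2
    simpa [Real.norm_eq_abs] using h2
  set u : ℕ → ℝ := fun n => s n * (T (lp.single 1 n 1) : ℕ → ℝ) j with hu_def
  have hui : ∀ n, |u n| ≤ 1 := by
    intro n
    rw [hu_def]
    simp only []
    rw [abs_mul]
    have h1 : |s n| = 1 := by rw [← Real.norm_eq_abs]; exact hs n
    rw [h1, one_mul]
    exact hxb n
  rw [hTvj j, Real.norm_eq_abs] at hj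
  rcases le_or_gt 0 (∑ n ∈ Finset.range (m+1), u n) with hpos | hneg
  · left
    refine ⟨j, fun n hn => ?_⟩
    have hS : (m : ℝ) + 1/2 ≤ ∑ n ∈ Finset.range (m+1), u n := by
      rw [abs_of_nonneg hpos] at hj; linarith
    exact term_bound u hui hS n hn
  · right
    refine ⟨j, fun n hn => ?_⟩
    have hS : (m : ℝ) + 1/2 ≤ ∑ n ∈ Finset.range (m+1), (fun n => -u n) n := by
      rw [abs_of_neg hneg] at hj
      rw [Finset.sum_neg_distrib]
      linarith
    have h2 := term_bound (fun n => -u n) (fun n => by simpa using hui n) hS n hn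
    replace h2 : 1/2 ≤ -u n := h2
    have h3 : u n ≤ -(1/2) := by linarith
    exact h3

end AuxiliaryForStatement8

/-- If `T : ℓ¹ → ℓ^∞` is a linear isometric embedding, then the image of the
unit basis of ℓ¹ under `T` is not functionally bounded in ℓ^∞ with its weak topology. -/
theorem image_of_l1_basis_not_weakly_functionally_bounded_in_linfty
    (T : lp (fun _ : ℕ => ℝ) 1 →ₗᵢ[ℝ] lp (fun _ : ℕ => ℝ) ⊤) :
    ¬ FunBounded (weakTop (lp (fun _ : ℕ => ℝ) ⊤))
      (Set.range fun n : ℕ => T (lp.single 1 n 1)) := by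
  intro hFB
  classical
  set x : ℕ → lp (fun _ : ℕ => ℝ) ⊤ := fun n => T (lp.single 1 n 1) with hx_def
  have hxnorm : ∀ n, ‖x n‖ = 1 := by
    intro n
    rw [hx_def]
    simp only []
    rw [T.norm_map]
    have h := lp.norm_single (p := 1) (E := fun _ : ℕ => ℝ) (by norm_num) n (1:ℝ)
    simpa using h
  -- Step B : signs and coordinate sequences
  have signs : ∀ k : ℕ, ∃ τ : ℝ, |τ| = 1 ∧ ∀ m, ∃ j, ∀ n ≤ m,
      1/2 ≤ τ * ((if n < k then (-1:ℝ) else 1) * (x n : ℕ → ℝ) j) := by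
    intro k
    by_cases h : ∀ m, ∃ j, ∀ n ≤ m, 1/2 ≤ (if n < k then (-1:ℝ) else 1) * (x n : ℕ → ℝ) j
    · refine ⟨1, abs_one, fun m => (h m).imp fun j hj n hn => ?_⟩
      rw [one_mul]; exact hj n hn
    · push_neg at h
      obtain ⟨m₀, hm₀⟩ := h
      refine ⟨-1, by norm_num, fun m => ?_⟩
      rcases key_pattern T k (max m m₀) with hpos | hneg
      · exfalso
        obtain ⟨j, hj⟩ := hpos
        obtain ⟨n, hn, hlt⟩ := hm₀ j
        exact absurd (hj n (le_trans hn (le_max_right m m₀))) (not_le.2 hlt)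
      · obtain ⟨j, hj⟩ := hneg
        refine ⟨j, fun n hn => ?_⟩
        have := hj n (le_trans hn (le_max_left m m₀))
        linarith
  choose τ hτ hpat using signs
  choose J hJ using hpat
  set q : Ultrafilter ℕ := hyperfilter ℕ with hq_def
  have hqTop : (q : Filter ℕ) ≤ atTop := Nat.hyperfilter_le_atTop
  -- the functionals θ k
  have hθb : ∀ k : ℕ, ∀ m (y : lp (fun _ : ℕ => ℝ) ⊤), |(τ k • coordCLM (J k m)) y| ≤ ‖y‖ := by
    intro k m y
    rw [ContinuousLinearMap.smul_apply, smul_eq_mul, abs_mul, hτ k, one_mul, coordCLM_apply]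
    have h2 := lp.norm_apply_le_norm ENNReal.top_ne_zero y (J k m)
    rwa [Real.norm_eq_abs] at h2
  set θ : ℕ → (lp (fun _ : ℕ => ℝ) ⊤ →L[ℝ] ℝ) :=
    fun k => ulimCLM q (fun m => τ k • coordCLM (J k m)) (hθb k) with hθ_def
  have hθtendsto : ∀ (k : ℕ) (y : lp (fun _ : ℕ => ℝ) ⊤), Tendsto (fun m => τ k * (y : ℕ → ℝ) (J k m)) (q : Filter ℕ)
      (𝓝 (θ k y)) := by
    intro k y
    have h := ulimCLM_tendsto q (fun m => τ k • coordCLM (J k m)) (hθb k) y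
    simpa [ContinuousLinearMap.smul_apply, smul_eq_mul, coordCLM_apply] using h
  have hθbound : ∀ k y, |θ k y| ≤ ‖y‖ := fun k y =>
    ulimCLM_bound q (fun m => τ k • coordCLM (J k m)) (hθb k) y
  have hθ_ge : ∀ k n, k ≤ n → 1/2 ≤ θ k (x n) := by
    intro k n hkn
    refine ge_of_tendsto (hθtendsto k (x n)) (hqTop ?_)
    filter_upwards [eventually_ge_atTop n] with m hm
    have h := hJ k m n hm
    rw [if_neg (not_lt.2 hkn), one_mul] at h
    exact h
  have hθ_le : ∀ k n, n < k → θ k (x n) ≤ -(1/2) := by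
    intro k n hnk
    refine le_of_tendsto (hθtendsto k (x n)) (hqTop ?_)
    filter_upwards [eventually_ge_atTop n] with m hm
    have h := hJ k m n hm
    rw [if_pos hnk] at h
    linarith
  -- the limit functional θs
  set θs : lp (fun _ : ℕ => ℝ) ⊤ →L[ℝ] ℝ := ulimCLM q θ hθbound with hθs_def
  have hθs_tendsto : ∀ y, Tendsto (fun k => θ k y) (q : Filter ℕ) (𝓝 (θs y)) :=
    ulimCLM_tendsto q θ hθbound
  have hθs_le : ∀ n, θs (x n) ≤ -(1/2) := by
    intro n
    refine le_of_tendsto (hθs_tendsto (x n)) (hqTop ?_)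
    filter_upwards [eventually_ge_atTop (n+1)] with k hk
    exact hθ_le k n (by omega)
  -- the family Φ and candidate cluster point c
  set Φ : ℕ → (lp (fun _ : ℕ => ℝ) ⊤ →L[ℝ] ℝ) :=
    fun i => Nat.casesOn i θs θ with hΦ_def
  have hΦbound : ∀ i n, |Φ i (x n)| ≤ 1 := by
    intro i n
    have h : |Φ i (x n)| ≤ ‖x n‖ := by
      cases i with
      | zero => exact ulimCLM_bound q θ hθbound (x n)
      | succ k => exact hθbound k (x n)
    rw [hxnorm n] at h
    exact h
  set c : ℕ → ℝ := fun i => ulim q (fun n => Φ i (x n)) with hc_def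
  have hc : ∀ i, Tendsto (fun n => Φ i (x n)) (q : Filter ℕ) (𝓝 (c i)) :=
    fun i => tendsto_ulim q (C := 1) (hΦbound i)
  have hc0 : c 0 ≤ -(1/2) := le_of_tendsto (hc 0) (Eventually.of_forall hθs_le)
  have hck : ∀ k, 1/2 ≤ c (k+1) := by
    intro k
    refine ge_of_tendsto (hc (k+1)) (hqTop ?_)
    filter_upwards [eventually_ge_atTop k] with n hn
    exact hθ_ge k n hn
  -- the map Θ into ℝ^ℕ
  set Θ : lp (fun _ : ℕ => ℝ) ⊤ → (ℕ → ℝ) := fun y i => Φ i y with hΘ_def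
  by_cases hex : ∃ y, Θ y = c
  · obtain ⟨y, hy⟩ := hex
    have h1 : ∀ k, 1/2 ≤ θ k y := by
      intro k
      have e : θ k y = c (k+1) := congrFun hy (k+1)
      rw [e]
      exact hck k
    have h2 : θs y ≤ -(1/2) := by
      have e : θs y = c 0 := congrFun hy 0
      rw [e]
      exact hc0
    have h3 : 1/2 ≤ θs y :=
      ge_of_tendsto (hθs_tendsto y) (Eventually.of_forall h1)
    linarith
  · push_neg at hex
    -- a continuous "distance to c" function on ℝ^ℕ
    set D : (ℕ → ℝ) → ℝ := fun z => ∑' i, (1/2 : ℝ)^i * min |z i - c i| 1 with hD_def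
    have hterm_nonneg : ∀ (z : ℕ → ℝ) i, 0 ≤ (1/2 : ℝ)^i * min |z i - c i| 1 := by
      intro z i
      apply mul_nonneg (by positivity)
      exact le_min (abs_nonneg _) zero_le_one
    have hterm_cont : ∀ i : ℕ, Continuous fun z : ℕ → ℝ => (1/2 : ℝ)^i * min |z i - c i| 1 :=
      fun i => continuous_const.mul
        (((continuous_apply i).sub continuous_const).abs.min continuous_const)
    have hsummable : Summable (fun i => (1/2 : ℝ)^i) :=
      summable_geometric_of_lt_one (by norm_num) (by norm_num)
    have hterm_le : ∀ (i : ℕ) (z : ℕ → ℝ), ‖(1/2 : ℝ)^i * min |z i - c i| 1‖ ≤ (1/2 : ℝ)^i := by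
      intro i z
      rw [Real.norm_eq_abs, abs_of_nonneg (hterm_nonneg z i)]
      calc (1/2 : ℝ)^i * min |z i - c i| 1 ≤ (1/2 : ℝ)^i * 1 :=
            mul_le_mul_of_nonneg_left (min_le_right _ _) (by positivity)
        _ = (1/2 : ℝ)^i := mul_one _
    have hDcont : Continuous D := continuous_tsum hterm_cont hsummable hterm_le
    have hDsummable : ∀ z : ℕ → ℝ, Summable fun i => (1/2 : ℝ)^i * min |z i - c i| 1 := by
      intro z
      exact Summable.of_nonneg_of_le (hterm_nonneg z)
        (fun i => by
          have := hterm_le i z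
          rwa [Real.norm_eq_abs, abs_of_nonneg (hterm_nonneg z i)] at this) hsummable
    have hDpos : ∀ z : ℕ → ℝ, z ≠ c → 0 < D z := by
      intro z hz
      obtain ⟨i, hi⟩ : ∃ i, z i ≠ c i := by
        by_contra hcon
        push_neg at hcon
        exact hz (funext hcon)
      have h1 : 0 < (1/2 : ℝ)^i * min |z i - c i| 1 := by
        apply mul_pos (by positivity)
        apply lt_min
        · exact abs_pos.2 (sub_ne_zero.2 hi)
        · norm_num
      calc (0:ℝ) < (1/2 : ℝ)^i * min |z i - c i| 1 := h1
        _ ≤ D z := Summable.le_tsum (hDsummable z) i fun j _ => hterm_nonneg z j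
    have hDc : D c = 0 := by
      rw [hD_def]
      simp
    set f : lp (fun _ : ℕ => ℝ) ⊤ → ℝ := fun y => (D (Θ y))⁻¹ with hf_def
    have hcoord : ∀ i : ℕ, @Continuous _ _ (weakTop (lp (fun _ : ℕ => ℝ) ⊤)) _
        (fun y => Θ y i) := fun i => weakTop_cont_eval (Φ i)
    have hΘcont : @Continuous _ _ (weakTop (lp (fun _ : ℕ => ℝ) ⊤)) _ Θ :=
      @continuous_pi _ ℕ (fun _ => ℝ) (weakTop (lp (fun _ : ℕ => ℝ) ⊤)) _ Θ hcoord
    have hDΘcont : @Continuous _ _ (weakTop (lp (fun _ : ℕ => ℝ) ⊤)) _ (D ∘ Θ) :=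
      @Continuous.comp _ _ _ (weakTop (lp (fun _ : ℕ => ℝ) ⊤)) _ _ Θ D hDcont hΘcont
    have hfcont : @Continuous _ _ (weakTop (lp (fun _ : ℕ => ℝ) ⊤)) _ f :=
      @Continuous.inv₀ _ ℝ _ _ _ _ (D ∘ Θ) (weakTop (lp (fun _ : ℕ => ℝ) ⊤)) hDΘcont
        (fun y => (hDpos (Θ y) (hex y)).ne')
    obtain ⟨C, hC⟩ := hFB f hfcont
    have htend : Tendsto (fun n => Θ (x n)) (q : Filter ℕ) (𝓝 c) :=
      tendsto_pi_nhds.2 hc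
    have hdist0 : Tendsto (fun n => D (Θ (x n))) (q : Filter ℕ) (𝓝 0) := by
      have h := (hDcont.tendsto c).comp htend
      rwa [hDc] at h
    have hev : ∀ᶠ n in (q : Filter ℕ), D (Θ (x n)) < (|C| + 1)⁻¹ := by
      have hpos : (0:ℝ) < (|C| + 1)⁻¹ := by positivity
      exact hdist0.eventually_lt_const hpos
    obtain ⟨n, hn⟩ := hev.exists
    have hfx : |f (x n)| ≤ C := hC (x n) ⟨n, rfl⟩
    have hDxn : 0 < D (Θ (x n)) := hDpos _ (hex (x n))
    have h5 : |C| + 1 < (D (Θ (x n)))⁻¹ := by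
      rw [show (|C| + 1 : ℝ) = ((|C| + 1)⁻¹)⁻¹ by rw [inv_inv]]
      exact inv_strictAnti₀ hDxn hn
    have h7 : 0 < f (x n) := inv_pos.2 hDxn
    rw [abs_of_pos h7] at hfx
    have h8 : C ≤ |C| := le_abs_self C
    have h9 : f (x n) = (D (Θ (x n)))⁻¹ := rfl
    linarith [h9 ▸ hfx]
end

section
/- Let (E,τ) be a real locally convex space such that both (E,τ) and E endowed with the weak topology σ(E,E') are μ-spaces. Suppose every subset of E that is functionally bounded in σ(E,E') is functionally bounded in τ. Then every subset A of E that is not functionally bounded in (E,τ) contains an infinite subset B which is discrete in the topology σ(E,E') and C-embedded in E endowed with σ(E,E'). -/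
open Filter Topology Bornology

/-- A subset `B` is discrete for the topology `t` if its `t`-subspace topology is discrete. -/
def DiscreteIn {E : Type*} (t : TopologicalSpace E) (B : Set E) : Prop :=
  @DiscreteTopology B (TopologicalSpace.induced (Subtype.val : B → E) t)

/-- A subset `B` is C-embedded for the topology `t` if every real-valued function that is
continuous on `B` (with the `t`-subspace topology) extends to a `t`-continuous function
on the whole space. -/
def CEmbeddedIn {E : Type*} (t : TopologicalSpace E) (B : Set E) : Prop :=
  ∀ f : B → ℝ,
    @Continuous B ℝ (TopologicalSpace.induced (Subtype.val : B → E) t) _ f →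
    ∃ g : E → ℝ, @Continuous E ℝ t _ g ∧ ∀ x : B, g x = f x

/-- If a continuous real-valued function separates the points of `S` by distance ≥ 1,
then `S` is discrete. -/
lemma sep_discreteTopology {X : Type*} [TopologicalSpace X] (S : Set X) (f : X → ℝ)
    (hf : Continuous f)
    (hsep : ∀ a ∈ S, ∀ b ∈ S, |f a - f b| < 1 → a = b) : DiscreteTopology S := by
  apply discreteTopology_iff_isOpen_singleton.mpr
  intro a
  have key : ({a} : Set S) = (Subtype.val) ⁻¹' (f ⁻¹' Metric.ball (f a.1) 1) := by
    ext b
    simp only [Set.mem_singleton_iff, Set.mem_preimage, Metric.mem_ball, Real.dist_eq]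
    constructor
    · rintro rfl; simp
    · intro hb; exact Subtype.ext (hsep b.1 b.2 a.1 a.2 hb)
  rw [key]
  exact (Metric.isOpen_ball.preimage hf).preimage continuous_subtype_val

/-- A 1-separated subset of ℝ is closed. -/
lemma sep_isClosed (T : Set ℝ) (hsep : ∀ a ∈ T, ∀ b ∈ T, |a - b| < 1 → a = b) :
    IsClosed T := by
  rw [← isOpen_compl_iff, Metric.isOpen_iff]
  intro y hy
  by_cases hex : ∃ a ∈ T, |y - a| < 1/2
  · obtain ⟨a, haT, ha⟩ := hex
    have hya : y ≠ a := fun hh => hy (hh ▸ haT)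
    refine ⟨min (1/2) |y - a|, lt_min (by norm_num) (abs_pos.mpr (sub_ne_zero.mpr hya)), ?_⟩
    intro z hz
    rw [Metric.mem_ball, Real.dist_eq] at hz
    intro hzT
    have h1 : |z - y| < 1/2 := lt_of_lt_of_le hz (min_le_left _ _)
    have h2 : |z - y| < |y - a| := lt_of_lt_of_le hz (min_le_right _ _)
    have h3 : |z - a| ≤ |z - y| + |y - a| := abs_sub_le z y a
    have h4 : z = a := hsep z hzT a haT (by linarith)
    rw [h4, abs_sub_comm] at h2
    exact absurd h2 (lt_irrefl _)
  · push_neg at hex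
    refine ⟨1/2, by norm_num, ?_⟩
    intro z hz hzT
    rw [Metric.mem_ball, Real.dist_eq] at hz
    have := hex z hzT
    rw [abs_sub_comm] at this
    exact absurd hz (not_lt.mpr this)

/-- Let `E` be a real locally convex space such that `E` and `E` with the
weak topology are μ-spaces and `E` weakly respects functional boundedness. Then every set
which is not functionally bounded in `E` contains an infinite subset which is discrete and
C-embedded in the weak topology. -/
theorem non_funBounded_contains_weakly_discrete_C_embedded
    (E : Type*) [AddCommGroup E] [Module ℝ E] [τ : TopologicalSpace E]
    [IsTopologicalAddGroup E] [ContinuousSMul ℝ E] [LocallyConvexSpace ℝ E]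
    (hμ : ∀ A : Set E, FunBounded τ A → IsCompact (closure A))
    (hμw : ∀ A : Set E, FunBounded (weakTop E) A →
      @IsCompact E (weakTop E) (@closure E (weakTop E) A))
    (h : ∀ A : Set E, FunBounded (weakTop E) A → FunBounded τ A) :
    ∀ A : Set E, ¬ FunBounded τ A →
      ∃ B ⊆ A, B.Infinite ∧ DiscreteIn (weakTop E) B ∧ CEmbeddedIn (weakTop E) B := by
  intro A hA
  have hA' : ¬ FunBounded (weakTop E) A := fun hw => hA (h A hw)
  unfold FunBounded at hA'
  push_neg at hA'
  obtain ⟨f, hf, hunb⟩ := hA'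
  choose xf hxA hxgt using hunb
  let x : ℕ → E := fun n => Nat.rec (xf 0) (fun _ p => xf (|f p| + 1)) n
  have hxm : ∀ n, x n ∈ A := by
    intro n
    cases n with
    | zero => exact hxA 0
    | succ k => exact hxA _
  have hstep : ∀ n, |f (x n)| + 1 < |f (x (n+1))| := fun n => hxgt _
  have hmono : StrictMono (fun n => |f (x n)| - n) := by
    apply strictMono_nat_of_lt_succ
    intro n
    have := hstep n
    push_cast
    linarith
  have hgap : ∀ m n : ℕ, m < n → |f (x m)| + 1 ≤ |f (x n)| := by
    intro m n hmn
    have h1 := hmono hmn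
    have h2 : (m:ℝ) + 1 ≤ n := by exact_mod_cast hmn
    simp only at h1
    linarith
  have hsep : ∀ m n : ℕ, |f (x m) - f (x n)| < 1 → m = n := by
    intro m n hlt
    by_contra hne
    have habs : 1 ≤ abs (|f (x m)| - |f (x n)|) := by
      rcases Nat.lt_or_ge m n with h1 | h1
      · have := hgap m n h1
        rw [abs_sub_comm, abs_of_nonneg (by linarith)]
        linarith
      · have h2 : n < m := lt_of_le_of_ne h1 (Ne.symm hne)
        have := hgap n m h2
        rw [abs_of_nonneg (by linarith)]
        linarith
    have := abs_abs_sub_abs_le_abs_sub (f (x m)) (f (x n))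
    linarith
  have hfxinj : Function.Injective (fun n => f (x n)) := by
    intro m n hmn
    exact hsep m n (by simp only at hmn; rw [hmn]; simp)
  have hxinj : Function.Injective x := fun m n hmn => hfxinj (by simp only; rw [hmn])
  refine ⟨Set.range x, ?_, Set.infinite_range_of_injective hxinj, ?_, ?_⟩
  · rintro y ⟨n, rfl⟩
    exact hxm n
  · exact @sep_discreteTopology E (weakTop E) (Set.range x) f hf (by
      rintro a ⟨m, rfl⟩ b ⟨n, rfl⟩ hab
      exact congrArg x (hsep m n hab))
  · intro g _
    set T : Set ℝ := Set.range (fun n => f (x n)) with hTdef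
    have hTsep : ∀ a ∈ T, ∀ b ∈ T, |a - b| < 1 → a = b := by
      rintro a ⟨m, rfl⟩ b ⟨n, rfl⟩ hab
      exact congrArg (fun n => f (x n)) (hsep m n hab)
    have hTclosed : IsClosed T := sep_isClosed T hTsep
    haveI : DiscreteTopology T :=
      sep_discreteTopology T id continuous_id (fun a ha b hb hab => hTsep a ha b hb hab)
    let hT : T → ℝ := fun s => g ⟨x s.2.choose, Set.mem_range_self _⟩
    obtain ⟨φ, hφ⟩ := ContinuousMap.exists_restrict_eq hTclosed
      ⟨hT, continuous_of_discreteTopology⟩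
    have h1 : ∀ s : T, φ s.1 = hT s := by
      intro s
      have := ContinuousMap.congr_fun hφ s
      rwa [ContinuousMap.restrict_apply] at this
    refine ⟨fun y => φ (f y), ?_, ?_⟩
    · exact @Continuous.comp E ℝ ℝ (weakTop E) _ _ _ _ φ.continuous hf
    · rintro ⟨y, hy⟩
      obtain ⟨n, rfl⟩ := hy
      have hyT : f (x n) ∈ T := ⟨n, rfl⟩
      show φ (f (x n)) = g ⟨x n, Set.mem_range_self n⟩
      rw [h1 ⟨f (x n), hyT⟩]
      have hm : f (x hyT.choose) = f (x n) := hyT.choose_spec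
      have hmn : hyT.choose = n := hfxinj hm
      exact congrArg g (Subtype.ext (congrArg x hmn))
end

section
/- Let (E,τ) be a real locally convex space such that E endowed with the weak topology σ(E,E') is a μ-space, (E,τ) is a μ-space, and every subset A of E that is not functionally bounded in (E,τ) contains an infinite subset B which is discrete and C-embedded in E endowed with σ(E,E'). Then every subset of E that is compact in σ(E,E') is compact in τ. -/
open Filter Topology Bornology

/-- Let `E` be a real locally convex space such that `E` and `E` with the
weak topology are μ-spaces, and every set which is not functionally bounded in `E` contains
an infinite subset which is discrete and C-embedded in the weak topology. Then every weakly
compact subset of `E` is compact. -/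
theorem weakly_respects_compactness_of_discrete_C_embedded
    (E : Type*) [AddCommGroup E] [Module ℝ E] [τ : TopologicalSpace E]
    [IsTopologicalAddGroup E] [ContinuousSMul ℝ E] [LocallyConvexSpace ℝ E]
    (hμw : ∀ A : Set E, FunBounded (weakTop E) A →
      @IsCompact E (weakTop E) (@closure E (weakTop E) A))
    (hμ : ∀ A : Set E, FunBounded τ A → IsCompact (closure A))
    (h : ∀ A : Set E, ¬ FunBounded τ A →
      ∃ B ⊆ A, B.Infinite ∧ DiscreteIn (weakTop E) B ∧ CEmbeddedIn (weakTop E) B) :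
    ∀ K : Set E, @IsCompact E (weakTop E) K → IsCompact K := by
  intro K hK
  -- K is functionally bounded in τ
  have hfb : FunBounded τ K := by
    by_contra hnb
    obtain ⟨B, hBK, hBinf, hdisc, hcemb⟩ := h K hnb
    have e := hBinf.natEmbedding
    have hinj : Function.Injective (e : ℕ → B) := e.injective
    set f : B → ℝ := Function.extend (e : ℕ → B) (fun n => (n : ℝ)) (fun _ => 0) with hfdef
    have hf : @Continuous B ℝ (TopologicalSpace.induced (Subtype.val : B → E) (weakTop E)) _ f :=
      @continuous_of_discreteTopology B (TopologicalSpace.induced (Subtype.val : B → E) (weakTop E)) hdisc ℝ _ f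
    obtain ⟨g, hg, hgf⟩ := hcemb f hf
    -- g is bounded on the weakly compact set K
    obtain ⟨C, hC⟩ := @IsCompact.exists_bound_of_continuousOn E ℝ _ (weakTop E) K hK g
      (@Continuous.continuousOn E ℝ (weakTop E) _ g K hg)
    obtain ⟨n, hn⟩ := exists_nat_gt C
    have hx : g ((e n : B) : E) = f (e n) := hgf (e n)
    have hfn : f (e n) = (n : ℝ) := hinj.extend_apply _ _ n
    have hb := hC ((e n : B) : E) (hBK (e n).2)
    rw [hx, hfn, Real.norm_natCast] at hb
    linarith
  have hCc : IsCompact (closure K) := hμ K hfb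
  rw [isCompact_iff_ultrafilter_le_nhds]
  intro F hF
  obtain ⟨a, haK, haw⟩ := (@isCompact_iff_ultrafilter_le_nhds E (weakTop E) K).mp hK F hF
  obtain ⟨b, hbC, hbτ⟩ := hCc.ultrafilter_le_nhds F
    (le_trans hF (principal_mono.mpr subset_closure))
  -- every continuous linear functional agrees on a and b
  have key : ∀ f : E →L[ℝ] ℝ, f a = f b := by
    intro f
    have hfw : @Continuous E ℝ (weakTop E) _ f :=
      @Continuous.comp E ((E →L[ℝ] ℝ) → ℝ) ℝ (weakTop E) _ _
        (fun x (g : E →L[ℝ] ℝ) => g x) (fun p => p f) (continuous_apply f)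
        (@continuous_induced_dom E ((E →L[ℝ] ℝ) → ℝ) (fun x (g : E →L[ℝ] ℝ) => g x) _)
    have h1 : Tendsto f (F : Filter E) (𝓝 (f a)) :=
      (@Continuous.tendsto E ℝ (weakTop E) _ f hfw a).mono_left haw
    have h2 : Tendsto f (F : Filter E) (𝓝 (f b)) :=
      (f.continuous.tendsto b).mono_left hbτ
    exact tendsto_nhds_unique h1 h2
  -- a is in the τ-closure of {b}
  have hmem : a ∈ closure ({b} : Set E) := by
    by_contra ha
    obtain ⟨f, u, hfa, hfs⟩ :=
      geometric_hahn_banach_point_closed ((convex_singleton b).closure) isClosed_closure ha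
    have := hfs b (subset_closure rfl)
    rw [key f] at hfa
    linarith
  have hspec : b ⤳ a := specializes_iff_mem_closure.mpr hmem
  exact ⟨a, haK, le_trans hbτ hspec⟩
end

section
/- Every functionally bounded subset of a real locally convex space E is totally bounded. -/
open Filter Topology Bornology Pointwise

/-- Every functionally bounded subset of a real locally convex space is
totally bounded: for every neighborhood `U` of zero there is a finite set `F` with
`A ⊆ F + U`. -/
theorem funBounded_totallyBounded
    (E : Type*) [AddCommGroup E] [Module ℝ E] [τ : TopologicalSpace E]
    [IsTopologicalAddGroup E] [ContinuousSMul ℝ E] [LocallyConvexSpace ℝ E]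
    (A : Set E) (hA : FunBounded τ A) :
    ∀ U ∈ nhds (0 : E), ∃ F : Set E, F.Finite ∧ A ⊆ F + U := by
  intro U hU
  by_contra hcon
  push_neg at hcon
  -- build a "U-separated" sequence in A
  have key : ∀ s : Finset E, (∀ y ∈ s, y ∈ A) → ∃ a, a ∈ A ∧ ∀ y ∈ s, a - y ∉ U := by
    intro s _
    have h := hcon s s.finite_toSet
    rw [Set.not_subset] at h
    obtain ⟨a, haA, haF⟩ := h
    exact ⟨a, haA, fun y hy hmem => haF ⟨y, hy, a - y, hmem, by module⟩⟩
  obtain ⟨x, hxA, hxr⟩ := exists_seq_of_forall_finset_exists (· ∈ A)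
    (fun b a => a - b ∉ U) key
  -- shrink U to an absolutely convex open W with W+W+W+W ⊆ U
  obtain ⟨U1, hU1, hU1sub⟩ := exists_nhds_zero_half hU
  obtain ⟨W0, hW0, hW0sub⟩ := exists_nhds_zero_half hU1
  obtain ⟨W, ⟨hW0mem, hWopen, hWbal, hWconv⟩, hWsub⟩ :=
    (nhds_hasBasis_absConvex_open ℝ E).mem_iff.1 hW0
  have hWnhds : W ∈ 𝓝 (0 : E) := hWopen.mem_nhds hW0mem
  have h4 : ∀ w1 ∈ W, ∀ w2 ∈ W, ∀ w3 ∈ W, ∀ w4 ∈ W, w1 + w2 + (w3 + w4) ∈ U := by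
    intro w1 h1 w2 h2 w3 h3 w4 hw4
    exact hU1sub _ (hW0sub _ (hWsub h1) _ (hWsub h2)) _ (hW0sub _ (hWsub h3) _ (hWsub hw4))
  have hWzero : (0 : E) ∈ W := hW0mem
  have habs : Absorbent ℝ W := absorbent_nhds_zero hWnhds
  have hneg : ∀ z ∈ W, -z ∈ W := fun z hz => hWbal.neg_mem_iff.2 hz
  have hWU : W ⊆ U := by
    intro w hw
    have := h4 w hw 0 hWzero 0 hWzero 0 hWzero
    simpa using this
  have hsep0 : ∀ m n, m ≠ n → x n - x m ∉ W := by
    intro m n hmn hmem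
    rcases hmn.lt_or_gt with h | h
    · exact hxr m n h (hWU hmem)
    · exact hxr n m h (hWU (by simpa [neg_sub] using hneg _ hmem))
  -- W+W translates of the sequence are pairwise disjoint
  have sep : ∀ m n, m ≠ n → ∀ y : E, y - x n ∈ W + W → y - x m ∈ W + W → False := by
    have base : ∀ m n, m < n → ∀ y : E, y - x n ∈ W + W → y - x m ∈ W + W → False := by
      intro m n hmn y hn hm
      obtain ⟨a, ha, b, hb, hab⟩ := hn
      obtain ⟨c, hc, d, hd, hcd⟩ := hm
      apply hxr m n hmn
      have hxy : x n - x m = c + d + (-a + -b) := by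
        have h1 : y - x n = a + b := hab.symm
        have h2 : y - x m = c + d := hcd.symm
        have h3 : (y - x m) - (y - x n) = x n - x m := by abel
        rw [h1, h2] at h3
        rw [← h3]; abel
      rw [hxy]
      exact h4 c hc d hd (-a) (hneg a ha) (-b) (hneg b hb)
    intro m n hmn
    rcases hmn.lt_or_gt with h | h
    · intro y h1 h2; exact base m n h y h1 h2
    · intro y h1 h2; exact base n m h y h2 h1
  -- the bump functions
  set p : E → ℝ := gauge W with hp
  have hpcont : Continuous p := continuous_gauge hWconv hWnhds
  set g : ℕ → E → ℝ := fun n y => (n : ℝ) * max 0 (1 - p (y - x n)) with hg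
  have hgcont : ∀ n, Continuous (g n) := fun n =>
    continuous_const.mul (continuous_const.max
      (continuous_const.sub (hpcont.comp (continuous_id.sub continuous_const))))
  have hgsupp : ∀ n y, g n y ≠ 0 → y - x n ∈ W := by
    intro n y hne
    have h1 : max 0 (1 - p (y - x n)) ≠ 0 := fun h => hne (by rw [hg]; simp [h])
    have h2 : p (y - x n) < 1 := by
      by_contra h
      push_neg at h
      exact h1 (max_eq_left (by linarith))
    exact gauge_lt_one_subset_self hWconv hWzero habs h2
  set f : E → ℝ := fun y => ∑' n, g n y with hf
  -- continuity of f : locally it agrees with a single bump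
  have hfc : Continuous f := by
    rw [continuous_iff_continuousAt]
    intro y
    have hN : (fun z => z - y) ⁻¹' W ∈ 𝓝 y := by
      apply ContinuousAt.preimage_mem_nhds (by fun_prop)
      simpa using hWnhds
    have hWW : ∀ z ∈ (fun z => z - y) ⁻¹' W, ∀ n, g n z ≠ 0 → y - x n ∈ W + W := by
      intro z hz n hne
      have h1 : z - x n ∈ W := hgsupp n z hne
      have h2 : y - z ∈ W := by simpa [neg_sub] using hneg _ hz
      exact ⟨y - z, h2, z - x n, h1, by abel_nf⟩
    by_cases hex : ∃ n, y - x n ∈ W + W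
    · obtain ⟨n0, hn0⟩ := hex
      have heq : ∀ z ∈ (fun z => z - y) ⁻¹' W, f z = g n0 z := by
        intro z hz
        apply tsum_eq_single
        intro m hm
        by_contra hne
        exact sep m n0 hm y hn0 (hWW z hz m hne)
      have hev : f =ᶠ[𝓝 y] g n0 := eventually_of_mem hN heq
      exact (hgcont n0).continuousAt.congr hev.symm
    · push_neg at hex
      have heq : ∀ z ∈ (fun z => z - y) ⁻¹' W, f z = 0 := by
        intro z hz
        have hz0 : ∀ n, g n z = 0 := by
          intro n
          by_contra hne
          exact hex n (hWW z hz n hne)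
        simp [hf, hz0]
      have hev : f =ᶠ[𝓝 y] fun _ => (0 : ℝ) := eventually_of_mem hN heq
      exact continuousAt_const.congr hev.symm
  -- f (x n) = n
  have hfx : ∀ n, f (x n) = n := by
    intro n
    have h1 : f (x n) = g n (x n) := by
      apply tsum_eq_single
      intro m hm
      have hnot : x n - x m ∉ W := hsep0 m n hm
      have h1le : (1 : ℝ) ≤ p (x n - x m) :=
        one_le_gauge_of_notMem (hWconv.starConvex hWzero) (habs _) hnot
      rw [hg]
      simp only
      rw [max_eq_left (by linarith)]
      ring
    rw [h1, hg]
    simp [hp, gauge_zero]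
  -- contradiction with functional boundedness
  obtain ⟨C, hC⟩ := hA f hfc
  obtain ⟨n, hn⟩ := exists_nat_gt C
  have := hC (x n) (hxA n)
  rw [hfx n] at this
  rw [abs_of_nonneg (Nat.cast_nonneg n)] at this
  linarith
end

section
/- Let X be a Tychonoff (completely regular Hausdorff) topological space and let C_c(X) denote the space of continuous real-valued functions on X with the compact-open topology. Then C_c(X) has the Schur property if and only if X does not contain an infinite compact subset. -/
open Filter Topology Bornology Set unitInterval

lemma tendsto_weakTop_iff {E : Type*} [AddCommGroup E] [Module ℝ E] [TopologicalSpace E]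
    (u : ℕ → E) (a : E) :
    Filter.Tendsto u Filter.atTop (@nhds E (weakTop E) a) ↔
      ∀ φ : E →L[ℝ] ℝ, Tendsto (fun n => φ (u n)) atTop (𝓝 (φ a)) := by
  rw [weakTop, nhds_induced, tendsto_comap_iff, tendsto_pi_nhds]
  rfl

section Aux

variable {X : Type*} [TopologicalSpace X] [T35Space X]

lemma exists_disjoint_family {K : Set X} (hK : IsCompact K) (hinf : K.Infinite) :
    ∃ (y : ℕ → X) (U : ℕ → Set X), (∀ n, y n ∈ K) ∧ (∀ n, y n ∈ U n) ∧
      (∀ n, IsOpen (U n)) ∧ Pairwise (Function.onFun Disjoint U) := by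
  obtain ⟨x, -, hx⟩ := hinf.exists_accPt_of_subset_isCompact hK subset_rfl
  have hstep : ∀ W : Set X, IsOpen W → x ∈ W →
      ∃ p : X × Set X × Set X, p.1 ∈ K ∧ p.1 ∈ p.2.1 ∧ IsOpen p.2.1 ∧ IsOpen p.2.2 ∧
        x ∈ p.2.2 ∧ Disjoint p.2.1 p.2.2 ∧ p.2.1 ⊆ W ∧ p.2.2 ⊆ W := by
    intro W hW hxW
    obtain ⟨y, ⟨hyW, hyK⟩, hyx⟩ := accPt_iff_nhds.1 hx W (hW.mem_nhds hxW)
    obtain ⟨A, B, hA, hB, hyA, hxB, hAB⟩ := t2_separation hyx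
    exact ⟨⟨y, A ∩ W, B ∩ W⟩, hyK, ⟨hyA, hyW⟩, hA.inter hW, hB.inter hW, ⟨hxB, hxW⟩,
      (hAB.mono inf_le_left inf_le_left), inter_subset_right, inter_subset_right⟩
  let inv : X × Set X × Set X → Prop := fun p =>
    p.1 ∈ K ∧ p.1 ∈ p.2.1 ∧ IsOpen p.2.1 ∧ IsOpen p.2.2 ∧ x ∈ p.2.2 ∧ Disjoint p.2.1 p.2.2
  let next : {p // inv p} → {p // inv p} := fun p =>
    ⟨(hstep p.1.2.2 p.2.2.2.2.1 p.2.2.2.2.2.1).choose,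
      by obtain ⟨h1, h2, h3, h4, h5, h6, -, -⟩ :=
           (hstep p.1.2.2 p.2.2.2.2.1 p.2.2.2.2.2.1).choose_spec
         exact ⟨h1, h2, h3, h4, h5, h6⟩⟩
  have hnext : ∀ p : {p // inv p}, (next p).1.2.1 ⊆ p.1.2.2 ∧ (next p).1.2.2 ⊆ p.1.2.2 :=
    fun p => ⟨(hstep p.1.2.2 p.2.2.2.2.1 p.2.2.2.2.2.1).choose_spec.2.2.2.2.2.2.1,
      (hstep p.1.2.2 p.2.2.2.2.1 p.2.2.2.2.2.1).choose_spec.2.2.2.2.2.2.2⟩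
  let e0 := hstep univ isOpen_univ (mem_univ x)
  let init : {p // inv p} := ⟨e0.choose,
    e0.choose_spec.1, e0.choose_spec.2.1, e0.choose_spec.2.2.1, e0.choose_spec.2.2.2.1,
    e0.choose_spec.2.2.2.2.1, e0.choose_spec.2.2.2.2.2.1⟩
  let F : ℕ → {p // inv p} := fun n => Nat.rec init (fun _ p => next p) n
  have hF : ∀ n, F (n + 1) = next (F n) := fun n => rfl
  have hWanti : ∀ m n, m ≤ n → (F n).1.2.2 ⊆ (F m).1.2.2 := by
    intro m n hmn
    induction n with
    | zero => simp_all
    | succ k ih =>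
      rcases Nat.lt_or_ge m (k+1) with h | h
      · exact ((hF k ▸ (hnext (F k)).2) : (F (k+1)).1.2.2 ⊆ (F k).1.2.2).trans
          (ih (Nat.lt_succ_iff.mp h))
      · have : m = k + 1 := le_antisymm hmn h
        subst this; exact subset_rfl
  refine ⟨fun n => (F n).1.1, fun n => (F n).1.2.1, fun n => (F n).2.1,
    fun n => (F n).2.2.1, fun n => (F n).2.2.2.1, ?_⟩
  have key : ∀ m n, m < n → Disjoint ((F m).1.2.1) ((F n).1.2.1) := by
    intro m n hmn
    obtain ⟨k, rfl⟩ := Nat.exists_eq_add_of_lt hmn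
    have h1 : (F (m + k + 1)).1.2.1 ⊆ (F (m + k)).1.2.2 := hF (m+k) ▸ (hnext (F (m+k))).1
    have h2 : (F (m + k)).1.2.2 ⊆ (F m).1.2.2 := hWanti m (m+k) (Nat.le_add_right _ _)
    exact ((F m).2.2.2.2.2.2).mono_right (h1.trans h2)
  intro m n hmn
  rcases hmn.lt_or_gt with h | h
  · exact key m n h
  · exact (key n m h).symm

lemma exists_bump (y : X) (U : Set X) (hU : IsOpen U) (hy : y ∈ U) :
    ∃ g : C(X, ℝ), g y = 1 ∧ (∀ x, g x ∈ Icc (0:ℝ) 1) ∧ ∀ x ∉ U, g x = 0 := by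
  obtain ⟨f, hf, hf0, hf1⟩ :=
    CompletelyRegularSpace.completely_regular y Uᶜ hU.isClosed_compl (by simpa using hy)
  refine ⟨⟨fun z => 1 - (f z : ℝ), by fun_prop⟩, ?_, ?_, ?_⟩
  · simp [hf0]
  · intro x
    constructor
    · simp [(f x).2.2]
    · simp only [ContinuousMap.coe_mk, tsub_le_iff_right, le_add_iff_nonneg_right]
      exact (f x).2.1
  · intro x hx
    have : f x = 1 := hf1 (by simpa using hx)
    simp [this]

omit [T35Space X] in
lemma exists_compact_bound (φ : C(X, ℝ) →L[ℝ] ℝ) :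
    ∃ (K : Set X) (ε : ℝ), IsCompact K ∧ 0 < ε ∧
      ∀ f : C(X, ℝ), (∀ x ∈ K, |f x| < ε) → |φ f| < 1 := by
  have h1 : {f : C(X, ℝ) | |φ f| < 1} ∈ 𝓝 (0 : C(X, ℝ)) := by
    have hopen : IsOpen {f : C(X, ℝ) | |φ f| < 1} := by
      have : {f : C(X, ℝ) | |φ f| < 1} = (fun f => |φ f|) ⁻¹' Iio 1 := rfl
      rw [this]
      exact (continuous_abs.comp φ.continuous).isOpen_preimage _ isOpen_Iio
    exact hopen.mem_nhds (by simp)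
  rw [UniformSpace.mem_nhds_iff] at h1
  obtain ⟨V, hV, hVsub⟩ := h1
  rw [ContinuousMap.mem_compactConvergence_entourage_iff] at hV
  obtain ⟨K, W, hK, hW, hWV⟩ := hV
  obtain ⟨ε, hε, hεW⟩ := Metric.mem_uniformity_dist.1 hW
  refine ⟨K, ε, hK, hε, fun f hf => ?_⟩
  have : ((0 : C(X, ℝ)), f) ∈ V := by
    apply hWV
    intro x hx
    apply hεW
    simpa [Real.dist_eq] using hf x hx
  exact hVsub this

end Aux

/-- For a Tychonoff space `X`, the space `C(X, ℝ)` with the compact-open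
topology has the Schur property if and only if `X` has no infinite compact subset. -/
theorem continuousMap_schur_iff_no_infinite_compact
    (X : Type*) [TopologicalSpace X] [T35Space X] :
    HasSchur C(X, ℝ) ↔ ¬ ∃ K : Set X, IsCompact K ∧ K.Infinite := by
  constructor
  · -- hard direction
    rintro hSchur ⟨K, hK, hinf⟩
    obtain ⟨y, U, hyK, hyU, hUopen, hUdisj⟩ := exists_disjoint_family hK hinf
    choose g hg1 hg01 hg0 using fun n => exists_bump (y n) (U n) (hUopen n) (hyU n)
    -- g is weakly null
    have hweak : Tendsto g atTop (@nhds C(X, ℝ) (weakTop C(X, ℝ)) 0) := by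
      rw [tendsto_weakTop_iff]
      intro φ
      rw [map_zero]
      -- partial sums of |φ (g n)| are bounded
      obtain ⟨K₀, ε, hK₀, hε, hφ⟩ := exists_compact_bound φ
      have hbound : ∀ F : Finset ℕ, ∑ n ∈ F, |φ (g n)| ≤ 2 / ε := by
        intro F
        set c : ℕ → ℝ := fun n => if 0 ≤ φ (g n) then 1 else -1 with hc
        set h : C(X, ℝ) := ∑ n ∈ F, c n • g n with hh
        have hφh : φ h = ∑ n ∈ F, |φ (g n)| := by
          rw [hh, map_sum]
          refine Finset.sum_congr rfl fun n _ => ?_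
          rw [map_smul]
          by_cases h0 : 0 ≤ φ (g n)
          · simp [hc, h0, abs_of_nonneg h0]
          · simp [hc, h0, abs_of_neg (lt_of_not_ge h0)]
        have hhx : ∀ x, |h x| ≤ 1 := by
          intro x
          have hx' : h x = ∑ n ∈ F, c n * g n x := by simp [hh]
          rw [hx']
          by_cases hex : ∃ n ∈ F, g n x ≠ 0
          · obtain ⟨n0, hn0F, hn0⟩ := hex
            have hxU : x ∈ U n0 := by
              by_contra hxU
              exact hn0 (hg0 n0 x hxU)
            have hsum : ∑ n ∈ F, c n * g n x = c n0 * g n0 x := by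
              refine Finset.sum_eq_single_of_mem n0 hn0F fun m hmF hm => ?_
              have : x ∉ U m := fun hxm =>
                (hUdisj hm).le_bot ⟨hxm, hxU⟩
              rw [hg0 m x this, mul_zero]
            rw [hsum, abs_mul]
            have hcabs : |c n0| = 1 := by
              by_cases h0 : 0 ≤ φ (g n0) <;> simp [hc, h0]
            rw [hcabs, one_mul, abs_of_nonneg (hg01 n0 x).1]
            exact (hg01 n0 x).2
          · push_neg at hex
            have : ∑ n ∈ F, c n * g n x = 0 :=
              Finset.sum_eq_zero fun n hn => by rw [hex n hn, mul_zero]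
            simp [this]
        -- apply the functional bound to (ε/2) • h
        have hkey : |φ ((ε / 2) • h)| < 1 := by
          apply hφ
          intro x hx
          have : ((ε / 2) • h) x = (ε / 2) * h x := rfl
          rw [this, abs_mul, abs_of_nonneg (by positivity : (0:ℝ) ≤ ε / 2)]
          calc ε / 2 * |h x| ≤ ε / 2 * 1 := by
                exact mul_le_mul_of_nonneg_left (hhx x) (by positivity)
            _ < ε := by linarith
        rw [map_smul, smul_eq_mul, abs_mul, abs_of_nonneg (by positivity : (0:ℝ) ≤ ε / 2)]
          at hkey
        have : |φ h| < 2 / ε := by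
          rw [lt_div_iff₀ hε]
          nlinarith [abs_nonneg (φ h)]
        calc ∑ n ∈ F, |φ (g n)| = φ h := hφh.symm
          _ ≤ |φ h| := le_abs_self _
          _ ≤ 2 / ε := this.le
      have hsummable : Summable fun n => |φ (g n)| :=
        summable_of_sum_range_le (fun n => abs_nonneg _) fun n => hbound (Finset.range n)
      exact (tendsto_zero_iff_abs_tendsto_zero _).2 hsummable.tendsto_atTop_zero
    -- but g is not null in the compact-open topology
    have hnot : ¬ Tendsto g atTop (𝓝 (0 : C(X, ℝ))) := by
      intro hten
      rw [ContinuousMap.tendsto_iff_forall_isCompact_tendstoUniformlyOn] at hten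
      have huni := hten K hK
      rw [Metric.tendstoUniformlyOn_iff] at huni
      have := huni 1 one_pos
      rw [eventually_atTop] at this
      obtain ⟨N, hN⟩ := this
      have := hN N le_rfl (y N) (hyK N)
      rw [hg1 N] at this
      simp at this
    exact hnot (hSchur g 0 hweak)
  · -- easy direction
    intro hfin u a hw
    have hφ : ∀ φ : C(X, ℝ) →L[ℝ] ℝ, Tendsto (fun n => φ (u n)) atTop (𝓝 (φ a)) :=
      (tendsto_weakTop_iff u a).1 hw
    have hpt : ∀ x : X, Tendsto (fun n => u n x) atTop (𝓝 (a x)) := by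
      intro x
      exact hφ { toFun := fun f => f x,
                 map_add' := fun f g => rfl,
                 map_smul' := fun c f => rfl,
                 cont := continuous_eval_const x }
    rw [ContinuousMap.tendsto_iff_forall_isCompact_tendstoUniformlyOn]
    intro K hK
    have hKfin : K.Finite := by
      by_contra h
      exact hfin ⟨K, hK, h⟩
    rw [Metric.tendstoUniformlyOn_iff]
    intro ε hε
    rw [hKfin.eventually_all]
    intro x hx
    have := (hpt x).eventually (Metric.ball_mem_nhds (a x) hε)
    filter_upwards [this] with n hn
    rw [dist_comm]
    exact hn
end

section
/- Let (E,τ) be a real barrelled locally convex space. Then E has the Schur property if and only if every σ(E',E)-bounded subset A of the dual E' is an E-limited set, i.e. sup{|χ(x_n)| : χ ∈ A} → 0 as n → ∞ for every sequence {x_n} in E converging to 0 in the weak topology σ(E,E'). -/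
open Filter Topology Bornology

/-- Hahn–Banach for seminorms: a linear functional dominated by `p` attaining `p v` at `v`. -/
lemma exists_dual_eq_seminorm {E : Type*} [AddCommGroup E] [Module ℝ E]
    (p : Seminorm ℝ E) (v : E) :
    ∃ g : E →ₗ[ℝ] ℝ, (∀ y, g y ≤ p y) ∧ g v = p v := by
  by_cases hv : v = (0 : E)
  · exact ⟨0, fun y => apply_nonneg p y, by simp [hv]⟩
  · set f : E →ₗ.[ℝ] ℝ := LinearPMap.mkSpanSingleton v (p v) hv with hf_def
    have hdom : f.domain = Submodule.span ℝ {v} := rfl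
    have hf : ∀ z : f.domain, f z ≤ p z := by
      rintro ⟨z, hz⟩
      have hz' : z ∈ Submodule.span ℝ {v} := hz
      rw [Submodule.mem_span_singleton] at hz'
      obtain ⟨c, rfl⟩ := hz'
      have : f ⟨c • v, hz⟩ = c • (p v) := LinearPMap.mkSpanSingleton'_apply _ _ _ c hz
      rw [this]
      have : p (c • v) = |c| * p v := by
        rw [map_smul_eq_mul]; simp [Real.norm_eq_abs]
      rw [this]
      calc c • p v = c * p v := rfl
        _ ≤ |c| * p v := mul_le_mul_of_nonneg_right (le_abs_self c) (apply_nonneg p v)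
    obtain ⟨g, hg1, hg2⟩ := exists_extension_of_le_sublinear f p
      (fun c hc x => by rw [map_smul_eq_mul]; simp [Real.norm_eq_abs, abs_of_pos hc])
      (fun x y => map_add_le_add p x y) hf
    refine ⟨g, hg2, ?_⟩
    have := hg1 ⟨v, Submodule.mem_span_singleton_self v⟩
    rw [this]
    exact LinearPMap.mkSpanSingleton_apply ℝ ℝ hv (p v)

/-- A real barrelled locally convex space has the Schur property if and only
if every σ(E',E)-bounded subset of the dual is an `E`-limited set. -/
theorem barrelled_schur_iff_weakStar_bounded_limited
    (E : Type*) [AddCommGroup E] [Module ℝ E] [TopologicalSpace E]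
    [IsTopologicalAddGroup E] [ContinuousSMul ℝ E] [LocallyConvexSpace ℝ E]
    [BarrelledSpace ℝ E] :
    HasSchur E ↔
      ∀ A : Set (E →L[ℝ] ℝ), (∀ x : E, ∃ C : ℝ, ∀ χ ∈ A, |χ x| ≤ C) →
        ∀ x : ℕ → E, Filter.Tendsto x Filter.atTop (@nhds E (weakTop E) 0) →
          ∀ ε : ℝ, 0 < ε → ∃ N : ℕ, ∀ n ≥ N, ∀ χ ∈ A, |χ (x n)| ≤ ε := by
  constructor
  · -- Schur ⇒ limited
    intro hS A hA x hx ε hε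
    have hx' : Tendsto x atTop (𝓝 (0 : E)) := hS x 0 hx
    -- the family of seminorms |χ ·| for χ ∈ A
    set q : A → Seminorm ℝ E :=
      fun χ => (normSeminorm ℝ ℝ).comp (χ.1 : E →ₗ[ℝ] ℝ) with hq_def
    have hqx : ∀ (χ : A) (y : E), q χ y = |χ.1 y| := by
      intro χ y; simp [hq_def, Seminorm.comp_apply, Real.norm_eq_abs]
    have bddpt : ∀ y : E, BddAbove (Set.range fun χ : A => q χ y) := by
      intro y
      obtain ⟨C, hC⟩ := hA y
      refine ⟨C, ?_⟩
      rintro t ⟨χ, rfl⟩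
      simp only [hqx]
      exact hC χ.1 χ.2
    have bdd : BddAbove (Set.range q) := (Seminorm.bddAbove_range_iff).mpr bddpt
    set P : Seminorm ℝ E := ⨆ χ : A, q χ with hP_def
    have hcont : Continuous P := by
      have h1 : Continuous (⨆ χ : A, ⇑(q χ)) :=
        Seminorm.continuous_iSup q (fun χ => χ.1.continuous.norm) bdd
      show Continuous ⇑(⨆ χ : A, q χ)
      rw [Seminorm.coe_iSup_eq bdd]
      exact h1
    have hsup_apply : ∀ y : E, P y = ⨆ χ : A, q χ y := by
      intro y
      rw [hP_def, Seminorm.coe_iSup_eq bdd]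
      exact iSup_apply
    have htend : Tendsto (fun n => P (x n)) atTop (𝓝 (0 : ℝ)) := by
      have := (hcont.tendsto 0).comp hx'
      simpa only [Function.comp_def, map_zero] using this
    have hev : ∀ᶠ n in atTop, P (x n) < ε := htend.eventually (gt_mem_nhds hε)
    obtain ⟨N, hN⟩ := eventually_atTop.mp hev
    refine ⟨N, fun n hn χ hχ => ?_⟩
    have hle : |χ (x n)| ≤ P (x n) := by
      rw [hsup_apply, ← hqx ⟨χ, hχ⟩ (x n)]
      exact le_ciSup (bddpt (x n)) ⟨χ, hχ⟩
    exact hle.trans (hN n hn).le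
  · -- limited ⇒ Schur
    intro h u a hu
    -- pointwise (weak) convergence
    have key : ∀ f : E →L[ℝ] ℝ, Tendsto (fun n => f (u n)) atTop (𝓝 (f a)) := by
      rw [weakTop, nhds_induced, tendsto_comap_iff, tendsto_pi_nhds] at hu
      exact hu
    set x : ℕ → E := fun n => u n - a with hx_def
    have hxweak : Tendsto x atTop (@nhds E (weakTop E) 0) := by
      rw [weakTop, nhds_induced, tendsto_comap_iff, tendsto_pi_nhds]
      intro f
      have := (key f).sub_const (f a)
      simpa [hx_def] using this
    rw [← tendsto_sub_nhds_zero_iff]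
    have hq := with_gaugeSeminormFamily (𝕜 := ℝ) (E := E)
    rw [hq.tendsto_nhds _ 0]
    intro i ε hε
    set p : Seminorm ℝ E := gaugeSeminormFamily ℝ E i with hp_def
    have hpcont : Continuous p := hq.continuous_seminorm i
    set A : Set (E →L[ℝ] ℝ) := {χ | ∀ y, |χ y| ≤ p y} with hA_def
    have hA : ∀ y : E, ∃ C : ℝ, ∀ χ ∈ A, |χ y| ≤ C := fun y => ⟨p y, fun χ hχ => hχ y⟩
    obtain ⟨N, hN⟩ := h A hA x hxweak (ε / 2) (half_pos hε)
    rw [eventually_atTop]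
    refine ⟨N, fun n hn => ?_⟩
    -- Hahn-Banach: find χ ∈ A with χ (x n) = p (x n)
    obtain ⟨g, hg1, hg2⟩ := exists_dual_eq_seminorm p (x n)
    have hgabs : ∀ y, |g y| ≤ p y := by
      intro y
      rw [abs_le]
      refine ⟨?_, hg1 y⟩
      have := hg1 (-y)
      rw [map_neg, map_neg_eq_map] at this
      linarith
    have hgcont : Continuous g := by
      have h0 : Tendsto g (𝓝 (0 : E)) (𝓝 (0 : ℝ)) := by
        have hp0 : Tendsto p (𝓝 (0 : E)) (𝓝 (0 : ℝ)) := by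
          have := hpcont.tendsto 0
          simpa using this
        have hpn : Tendsto (fun y => -(p y)) (𝓝 (0 : E)) (𝓝 (0 : ℝ)) := by
          have := hp0.neg; simpa using this
        refine tendsto_of_tendsto_of_tendsto_of_le_of_le hpn hp0 ?_ ?_
        · intro y; simpa using neg_le_of_abs_le (hgabs y)
        · intro y; exact (le_abs_self _).trans (hgabs y)
      exact continuous_of_continuousAt_zero g.toAddMonoidHom
        (by simpa [ContinuousAt, map_zero] using h0)
    set χ : E →L[ℝ] ℝ := ⟨g, hgcont⟩ with hχ_def
    have hχA : χ ∈ A := fun y => hgabs y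
    have := hN n hn χ hχA
    have hval : |χ (x n)| = p (x n) := by
      have : χ (x n) = p (x n) := hg2
      rw [this, abs_of_nonneg (apply_nonneg p _)]
    rw [hval] at this
    calc p (x n - 0) = p (x n) := by rw [sub_zero]
      _ ≤ ε / 2 := this
      _ < ε := half_lt_self hε
end
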